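/- arXiv:2010.15345 — 3 statements merged into one kernel-verified Lean document; each statement's English description precedes it below -/
import Mathlib

section
/- (Corollary 2.4) Suppose k = 0 (so Υₙ = 1 for all n) and let f(z) = z + Σ_{n≥2} aₙ zⁿ belong to the class B_Σ(0, φ). Assume B₁²·(2C(δ,3) − C(δ,2)²) − (B₂−B₁)·C(δ,2)² ≠ 0. Then |a₂| ≤ B₁·√B₁ / √( |B₁²·(2C(δ,3) − C(δ,2)²) − (B₂−B₁)·C(δ,2)²| ) and |a₃| ≤ B₁/(2C(δ,3)) + ( B₁/C(δ,2) )². -/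
open Complex

noncomputable section

/-- The open unit disk in ℂ. -/
def unitDisk : Set ℂ := Metric.ball 0 1

/-- Υₙ = (λ(α+β−1)(n−1))^k. -/
def Ups (lam al be : ℝ) (k n : ℕ) : ℝ := (lam * (al + be - 1) * ((n : ℝ) - 1)) ^ k

/-- C(δ,n) = Γ(n+δ)/(Γ(n)·Γ(δ+1)). -/
def Cdel (d : ℝ) (n : ℕ) : ℝ :=
  Real.Gamma ((n : ℝ) + d) / (Real.Gamma (n : ℝ) * Real.Gamma (d + 1))

/-- The operator D applied to a function with Taylor coefficients `a`
(where `a 0 = 0`, `a 1 = 1`): (Df)(z) = z + Σ_{n≥2} Υₙ·C(δ,n)·aₙ zⁿ. -/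
def Dop (lam al be d : ℝ) (k : ℕ) (a : ℕ → ℂ) : ℂ → ℂ := fun z =>
  z + ∑' n : ℕ, if 2 ≤ n then (Ups lam al be k n : ℂ) * (Cdel d n : ℂ) * a n * z ^ n else 0

/-- Subordination F ≺ G on the unit disk. -/
def Subord (F G : ℂ → ℂ) : Prop :=
  ∃ u : ℂ → ℂ, AnalyticOnNhd ℂ u unitDisk ∧ u 0 = 0 ∧
    (∀ z ∈ unitDisk, ‖u z‖ < 1) ∧ ∀ z ∈ unitDisk, F z = G (u z)

/-- z ↦ (z·F′(z)/F(z))·((F(z)/z)^γ), with the value 1 at the origin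
(principal-branch complex power). -/
def bazFun (g : ℝ) (F : ℂ → ℂ) : ℂ → ℂ := fun z =>
  if z = 0 then 1 else (z * deriv F z / F z) * ((F z / z) ^ (g : ℂ))

/-- `f` is analytic on the unit disk, normalized, with Taylor coefficients `a`
(`a 0 = 0`, `a 1 = 1`). -/
def IsInA (f : ℂ → ℂ) (a : ℕ → ℂ) : Prop :=
  AnalyticOnNhd ℂ f unitDisk ∧ a 0 = 0 ∧ a 1 = 1 ∧
    ∀ z ∈ unitDisk, HasSum (fun n => a n * z ^ n) (f z)

/-- Membership of `f` (with coefficients `a`, and inverse `g` with coefficients `b`)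
in the class B_Σ(γ, φ). -/
def MemB (lam al be d : ℝ) (k : ℕ) (g : ℝ) (φ : ℂ → ℂ)
    (f gf : ℂ → ℂ) (a b : ℕ → ℂ) : Prop :=
  IsInA f a ∧ Set.InjOn f unitDisk ∧
  IsInA gf b ∧ Set.InjOn gf unitDisk ∧
  (∀ w : ℂ, ‖w‖ < 1 / 4 → f (gf w) = w) ∧
  b 2 = -a 2 ∧ b 3 = 2 * a 2 ^ 2 - a 3 ∧
  (∀ z ∈ unitDisk, z ≠ 0 → Dop lam al be d k a z ≠ 0) ∧
  (∀ z ∈ unitDisk, z ≠ 0 → Dop lam al be d k b z ≠ 0) ∧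
  Subord (bazFun g (Dop lam al be d k a)) φ ∧
  Subord (bazFun g (Dop lam al be d k b)) φ

open Metric Filter Topology
open scoped NNReal ENNReal

lemma Cdel_pos {d : ℝ} (hd : 0 ≤ d) {n : ℕ} (hn : 1 ≤ n) : 0 < Cdel d n := by
  have h1 : (0:ℝ) < (n:ℝ) := by exact_mod_cast hn
  exact div_pos (Real.Gamma_pos_of_pos (by linarith))
    (mul_pos (Real.Gamma_pos_of_pos h1) (Real.Gamma_pos_of_pos (by linarith)))

lemma Cdel_one {d : ℝ} (hd : 0 ≤ d) : Cdel d 1 = 1 := by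
  have hpos : 0 < Real.Gamma (d + 1) := Real.Gamma_pos_of_pos (by linarith)
  unfold Cdel
  push_cast
  rw [Real.Gamma_one, add_comm (1:ℝ) d]
  field_simp

lemma Cdel_succ {d : ℝ} (hd : 0 ≤ d) {n : ℕ} (hn : 1 ≤ n) :
    Cdel d (n+1) = (((n:ℝ) + d)/n) * Cdel d n := by
  have hn0 : (0:ℝ) < (n:ℝ) := by exact_mod_cast hn
  have hnd : (0:ℝ) < (n:ℝ) + d := by linarith
  unfold Cdel
  push_cast
  rw [show ((n:ℝ) + 1 + d) = ((n:ℝ) + d) + 1 by ring, Real.Gamma_add_one hnd.ne',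
    Real.Gamma_add_one hn0.ne']
  have h1 : Real.Gamma (n:ℝ) ≠ 0 := (Real.Gamma_pos_of_pos hn0).ne'
  have h2 : Real.Gamma (d+1) ≠ 0 := (Real.Gamma_pos_of_pos (by linarith)).ne'
  field_simp

lemma Cdel_le {d : ℝ} (hd : 0 ≤ d) : ∀ n : ℕ, 1 ≤ n → Cdel d n ≤ (1+d)^n := by
  intro n
  induction n with
  | zero => omega
  | succ m ih =>
    intro _
    rcases Nat.eq_zero_or_pos m with hm | hm
    · subst hm
      rw [Cdel_one hd, pow_one]
      linarith
    · rw [Cdel_succ hd hm]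
      have h1 : ((m:ℝ) + d)/m ≤ 1 + d := by
        rw [div_le_iff₀ (by exact_mod_cast hm)]
        have : (1:ℝ) ≤ (m:ℝ) := by exact_mod_cast hm
        nlinarith
      have h2 : Cdel d m ≤ (1+d)^m := ih hm
      have h3 : (0:ℝ) < Cdel d m := Cdel_pos hd hm
      calc ((m:ℝ)+d)/m * Cdel d m ≤ (1+d) * (1+d)^m := by
            apply mul_le_mul h1 h2 h3.le (by linarith)
        _ = (1+d)^(m+1) := by ring

def dcoeff (d : ℝ) (a : ℕ → ℂ) : ℕ → ℂ := fun n =>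
  if n = 0 then 0 else if n = 1 then 1 else ((Cdel d n : ℝ) : ℂ) * a n

lemma Dop_zero (lam al be d : ℝ) (k : ℕ) (a : ℕ → ℂ) : Dop lam al be d k a 0 = 0 := by
  unfold Dop
  have h : ∀ n : ℕ,
      (if 2 ≤ n then (Ups lam al be k n : ℂ) * (Cdel d n : ℂ) * a n * (0:ℂ) ^ n else 0) = 0 := by
    intro n
    split
    · rename_i hn
      rw [zero_pow (by omega), mul_zero]
    · rfl
  rw [tsum_congr h]
  simp

-- ===== part A =====




lemma mem_unitDisk {z : ℂ} : z ∈ unitDisk ↔ ‖z‖ < 1 := by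
  simp [unitDisk, Metric.mem_ball, dist_zero_right]

lemma ofScalars_coeff (c : ℕ → ℂ) (n : ℕ) :
    (FormalMultilinearSeries.ofScalars ℂ c).coeff n = c n := by
  rw [FormalMultilinearSeries.coeff]
  show (FormalMultilinearSeries.ofScalars ℂ c n) (fun _ => 1) = c n
  rw [FormalMultilinearSeries.ofScalars_apply_eq]
  simp

lemma coeff_bound {F : ℂ → ℂ} {a : ℕ → ℂ}
    (h : ∀ z ∈ unitDisk, HasSum (fun n => a n * z ^ n) (F z)) :
    ∃ M : ℝ, 1 ≤ M ∧ ∀ n, ‖a n‖ ≤ M * 2 ^ n := by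
  have hhalf : ((1/2 : ℝ) : ℂ) ∈ unitDisk := by
    rw [mem_unitDisk]
    simp [Complex.norm_real]
    norm_num
  have hs := (h _ hhalf).summable
  have ht : Filter.Tendsto (fun n => ‖a n * ((1/2:ℝ):ℂ) ^ n‖) atTop (nhds 0) := by
    simpa using hs.tendsto_atTop_zero.norm
  obtain ⟨M0, hM0⟩ := ht.bddAbove_range
  refine ⟨max M0 1, le_max_right _ _, fun n => ?_⟩
  have h1 : ‖a n‖ * (1/2)^n ≤ M0 := by
    have := hM0 (Set.mem_range_self n)
    simpa [norm_mul, norm_pow, Complex.norm_real] using this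
  have h2 : ‖a n‖ * (1/2)^n ≤ max M0 1 := h1.trans (le_max_left _ _)
  have : ‖a n‖ * (1/2)^n * 2^n ≤ max M0 1 * 2^n := by
    apply mul_le_mul_of_nonneg_right h2 (by positivity)
  calc ‖a n‖ = ‖a n‖ * (1/2)^n * 2^n := by
        rw [mul_assoc, ← mul_pow]; norm_num
    _ ≤ max M0 1 * 2^n := this

lemma hasFPSOB_of_bound (F : ℂ → ℂ) (c : ℕ → ℂ) {M t : ℝ} (ht : 1 ≤ t) (hM : 0 ≤ M)
    (hb : ∀ n, ‖c n‖ ≤ M * t ^ n)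
    (hF : ∀ y : ℂ, ‖y‖ < t⁻¹ → HasSum (fun n => c n * y ^ n) (F y)) :
    HasFPowerSeriesOnBall F (FormalMultilinearSeries.ofScalars ℂ c) 0
      (ENNReal.ofReal t⁻¹) := by
  have ht0 : 0 < t := lt_of_lt_of_le one_pos ht
  have hti : 0 < t⁻¹ := inv_pos.2 ht0
  constructor
  · -- radius
    have : ((t⁻¹.toNNReal : NNReal) : ENNReal) ≤ (FormalMultilinearSeries.ofScalars ℂ c).radius := by
      apply FormalMultilinearSeries.le_radius_of_bound _ M
      intro n
      have hcoe : ((t⁻¹.toNNReal : NNReal) : ℝ) = t⁻¹ := Real.coe_toNNReal _ hti.le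
      rw [FormalMultilinearSeries.ofScalars_norm, hcoe]
      calc ‖c n‖ * t⁻¹ ^ n ≤ (M * t ^ n) * t⁻¹ ^ n := by
            apply mul_le_mul_of_nonneg_right (hb n) (by positivity)
        _ = M := by
            rw [mul_assoc, ← mul_pow]
            field_simp
            rw [one_pow, mul_one]
    simpa [ENNReal.ofReal] using this
  · simp [ENNReal.ofReal_pos, hti]
  · intro y hy
    have hy' : ‖y‖ < t⁻¹ := by
      rw [EMetric.mem_ball, edist_dist, dist_zero_right] at hy
      exact (ENNReal.ofReal_lt_ofReal_iff hti).1 hy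
    have := hF y hy'
    rw [zero_add]
    have hfun : (fun n => (FormalMultilinearSeries.ofScalars ℂ c n) (fun _ => y))
        = fun n => c n * y ^ n := by
      funext n
      rw [FormalMultilinearSeries.ofScalars_apply_eq]
      simp [smul_eq_mul]
    rw [hfun]
    exact this

lemma iteratedDeriv_of_hasFPSAt {f : ℂ → ℂ} {p : FormalMultilinearSeries ℂ ℂ ℂ} {x : ℂ}
    (h : HasFPowerSeriesAt f p x) (n : ℕ) :
    iteratedDeriv n f x = ((Nat.factorial n : ℕ) : ℂ) * p.coeff n := by
  obtain ⟨r, hr⟩ := h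
  have := hr.factorial_smul (1 : ℂ) n
  rw [iteratedDeriv_eq_iteratedFDeriv]
  have h2 : iteratedFDeriv ℂ n f x (fun _ => 1) = (Nat.factorial n) • p n (fun _ => 1) := this.symm
  rw [h2, nsmul_eq_mul]
  rfl

-- ===== Dop power series =====
lemma Dop_hasFPS {lam al be d : ℝ} (hd : 0 ≤ d) {a : ℕ → ℂ} {M : ℝ} (hM : 1 ≤ M)
    (hb : ∀ n, ‖a n‖ ≤ M * 2 ^ n) :
    HasFPowerSeriesOnBall (Dop lam al be d 0 a)
      (FormalMultilinearSeries.ofScalars ℂ (dcoeff d a)) 0 (ENNReal.ofReal (2+2*d)⁻¹) := by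
  have ht : (1:ℝ) ≤ 2 + 2*d := by linarith
  have ht0 : (0:ℝ) < 2 + 2*d := by linarith
  apply hasFPSOB_of_bound _ _ ht (by linarith)
  · intro n
    match n with
    | 0 =>
      have h0 : ‖dcoeff d a 0‖ = 0 := by simp [dcoeff]
      rw [h0]; positivity
    | 1 =>
      have h1 : ‖dcoeff d a 1‖ = 1 := by simp [dcoeff]
      rw [h1]
      nlinarith
    | (m+2) =>
      have h2 : dcoeff d a (m+2) = ((Cdel d (m+2) : ℝ):ℂ) * a (m+2) := by simp [dcoeff]
      rw [h2, norm_mul, Complex.norm_real, Real.norm_eq_abs]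
      have hC : |Cdel d (m+2)| ≤ (1+d)^(m+2) := by
        rw [abs_of_pos (Cdel_pos hd (by omega))]
        exact Cdel_le hd (m+2) (by omega)
      calc |Cdel d (m+2)| * ‖a (m+2)‖ ≤ (1+d)^(m+2) * (M * 2^(m+2)) := by
            apply mul_le_mul hC (hb _) (norm_nonneg _) (by positivity)
        _ = M * (2+2*d)^(m+2) := by
            rw [show (2+2*d : ℝ) = 2*(1+d) by ring, mul_pow]
            ring
  · intro y hy
    have hyt : (2+2*d) * ‖y‖ < 1 := by
      calc (2+2*d) * ‖y‖ < (2+2*d) * (2+2*d)⁻¹ := by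
            apply mul_lt_mul_of_pos_left hy ht0
        _ = 1 := mul_inv_cancel₀ ht0.ne'
    have hsum2 : Summable (fun n => if 2 ≤ n then ((Cdel d n : ℝ):ℂ) * a n * y ^ n else 0) := by
      apply Summable.of_norm
      have hle : ∀ n, ‖if 2 ≤ n then ((Cdel d n : ℝ):ℂ) * a n * y ^ n else 0‖
          ≤ M * ((2+2*d) * ‖y‖)^n := by
        intro n
        split
        · rename_i hn
          rw [norm_mul, norm_mul, Complex.norm_real, Real.norm_eq_abs, norm_pow]
          have hC : |Cdel d n| ≤ (1+d)^n := by
            rw [abs_of_pos (Cdel_pos hd (by omega))]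
            exact Cdel_le hd n (by omega)
          calc |Cdel d n| * ‖a n‖ * ‖y‖^n ≤ ((1+d)^n * (M * 2^n)) * ‖y‖^n := by
                apply mul_le_mul_of_nonneg_right _ (by positivity)
                exact mul_le_mul hC (hb n) (norm_nonneg _) (by positivity)
            _ = M * ((2+2*d)*‖y‖)^n := by
                rw [mul_pow, show (2+2*d : ℝ) = 2*(1+d) by ring, mul_pow]
                ring
        · simpa using by positivity
      exact Summable.of_nonneg_of_le (fun n => norm_nonneg _) hle
        ((summable_geometric_of_lt_one (by positivity) hyt).mul_left M)
    have h1 : HasSum (fun n => if n = 1 then y else (0:ℂ)) y := hasSum_ite_eq 1 y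
    have hadd := h1.add hsum2.hasSum
    have hfun : (fun n => dcoeff d a n * y ^ n) = fun n =>
        (if n = 1 then y else 0) + (if 2 ≤ n then ((Cdel d n : ℝ):ℂ) * a n * y ^ n else 0) := by
      funext n
      match n with
      | 0 => simp [dcoeff]
      | 1 => simp [dcoeff]
      | (m+2) => simp [dcoeff]
    rw [hfun]
    have hD : Dop lam al be d 0 a y
        = y + ∑' n, (if 2 ≤ n then ((Cdel d n : ℝ):ℂ) * a n * y ^ n else 0) := by
      unfold Dop
      congr 1
      apply tsum_congr
      intro n
      split
      · simp [Ups]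
      · rfl
    rw [hD]
    exact hadd

-- ===== ODE coefficient extraction =====
lemma key_ode {D P : ℂ → ℂ} {ρ : ℝ} (hρ : 0 < ρ)
    (hD : AnalyticOnNhd ℂ D (ball 0 ρ)) (hP : AnalyticOnNhd ℂ P (ball 0 ρ))
    (hD0 : D 0 = 0) (hd10 : deriv D 0 = 1)
    (heq : ∀ z ∈ ball (0:ℂ) ρ, z * deriv D z = P z * D z) :
    iteratedDeriv 2 D 0 = 2 * deriv P 0 ∧
      2 * iteratedDeriv 3 D 0 = 3 * iteratedDeriv 2 P 0 + 3 * deriv P 0 * iteratedDeriv 2 D 0 := by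
  have h0 : (0:ℂ) ∈ ball (0:ℂ) ρ := mem_ball_self hρ
  have hnb : ball (0:ℂ) ρ ∈ 𝓝 (0:ℂ) := isOpen_ball.mem_nhds h0
  set d1 := deriv D with hd1def
  set d2 := deriv d1 with hd2def
  set d3 := deriv d2 with hd3def
  set p1 := deriv P with hp1def
  set p2 := deriv p1 with hp2def
  have hA1 : AnalyticOnNhd ℂ d1 (ball 0 ρ) := hD.deriv
  have hA2 : AnalyticOnNhd ℂ d2 (ball 0 ρ) := hA1.deriv
  have hA3 : AnalyticOnNhd ℂ d3 (ball 0 ρ) := hA2.deriv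
  have hB1 : AnalyticOnNhd ℂ p1 (ball 0 ρ) := hP.deriv
  have hB2 : AnalyticOnNhd ℂ p2 (ball 0 ρ) := hB1.deriv
  have e0 : (fun z => z * d1 z) =ᶠ[𝓝 (0:ℂ)] (fun z => P z * D z) :=
    Filter.eventuallyEq_of_mem hnb (fun z hz => heq z hz)
  have l1 : deriv (fun z => z * d1 z) =ᶠ[𝓝 (0:ℂ)] (fun z => d1 z + z * d2 z) :=
    Filter.eventuallyEq_of_mem hnb (fun z hz => by
      rw [deriv_fun_mul differentiableAt_fun_id ((hA1 z hz).differentiableAt), deriv_id'']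
      ring)
  have r1 : deriv (fun z => P z * D z) =ᶠ[𝓝 (0:ℂ)] (fun z => p1 z * D z + P z * d1 z) :=
    Filter.eventuallyEq_of_mem hnb (fun z hz => by
      rw [deriv_fun_mul ((hP z hz).differentiableAt) ((hD z hz).differentiableAt)])
  have e1 : (fun z => d1 z + z * d2 z) =ᶠ[𝓝 (0:ℂ)] (fun z => p1 z * D z + P z * d1 z) :=
    l1.symm.trans (e0.deriv.trans r1)
  have hP0 : P 0 = 1 := by
    have h1 := e1.eq_of_nhds
    simp only [hd10, hD0, mul_zero, zero_mul, mul_one, add_zero, zero_add] at h1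
    exact h1.symm
  have l2 : deriv (fun z => d1 z + z * d2 z) =ᶠ[𝓝 (0:ℂ)]
      (fun z => d2 z + (d2 z + z * d3 z)) :=
    Filter.eventuallyEq_of_mem hnb (fun z hz => by
      rw [deriv_fun_add ((hA1 z hz).differentiableAt)
          (differentiableAt_fun_id.fun_mul ((hA2 z hz).differentiableAt)),
        deriv_fun_mul differentiableAt_fun_id ((hA2 z hz).differentiableAt), deriv_id'']
      ring)
  have r2 : deriv (fun z => p1 z * D z + P z * d1 z) =ᶠ[𝓝 (0:ℂ)]
      (fun z => (p2 z * D z + p1 z * d1 z) + (p1 z * d1 z + P z * d2 z)) :=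
    Filter.eventuallyEq_of_mem hnb (fun z hz => by
      rw [deriv_fun_add (((hB1 z hz).differentiableAt).fun_mul ((hD z hz).differentiableAt))
          (((hP z hz).differentiableAt).fun_mul ((hA1 z hz).differentiableAt)),
        deriv_fun_mul ((hB1 z hz).differentiableAt) ((hD z hz).differentiableAt),
        deriv_fun_mul ((hP z hz).differentiableAt) ((hA1 z hz).differentiableAt)])
  have e2 : (fun z => d2 z + (d2 z + z * d3 z)) =ᶠ[𝓝 (0:ℂ)]
      (fun z => (p2 z * D z + p1 z * d1 z) + (p1 z * d1 z + P z * d2 z)) :=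
    l2.symm.trans (e1.deriv.trans r2)
  have hA : d2 0 = 2 * p1 0 := by
    have h2 := e2.eq_of_nhds
    simp only [hd10, hD0, hP0, mul_zero, zero_mul, mul_one, one_mul, add_zero, zero_add] at h2
    linear_combination h2
  have l3 : deriv (fun z => d2 z + (d2 z + z * d3 z)) =ᶠ[𝓝 (0:ℂ)]
      (fun z => d3 z + (d3 z + (d3 z + z * deriv d3 z))) :=
    Filter.eventuallyEq_of_mem hnb (fun z hz => by
      rw [deriv_fun_add ((hA2 z hz).differentiableAt)
          (((hA2 z hz).differentiableAt).fun_add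
            (differentiableAt_fun_id.fun_mul ((hA3 z hz).differentiableAt))),
        deriv_fun_add ((hA2 z hz).differentiableAt)
          (differentiableAt_fun_id.fun_mul ((hA3 z hz).differentiableAt)),
        deriv_fun_mul differentiableAt_fun_id ((hA3 z hz).differentiableAt), deriv_id'']
      ring)
  have r3 : deriv (fun z => (p2 z * D z + p1 z * d1 z) + (p1 z * d1 z + P z * d2 z))
      =ᶠ[𝓝 (0:ℂ)]
      (fun z => ((deriv p2 z * D z + p2 z * d1 z) + (p2 z * d1 z + p1 z * d2 z)) +
        ((p2 z * d1 z + p1 z * d2 z) + (p1 z * d2 z + P z * d3 z))) :=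
    Filter.eventuallyEq_of_mem hnb (fun z hz => by
      rw [deriv_fun_add
          ((((hB2 z hz).differentiableAt).fun_mul ((hD z hz).differentiableAt)).fun_add
            (((hB1 z hz).differentiableAt).fun_mul ((hA1 z hz).differentiableAt)))
          ((((hB1 z hz).differentiableAt).fun_mul ((hA1 z hz).differentiableAt)).fun_add
            (((hP z hz).differentiableAt).fun_mul ((hA2 z hz).differentiableAt))),
        deriv_fun_add (((hB2 z hz).differentiableAt).fun_mul ((hD z hz).differentiableAt))
          (((hB1 z hz).differentiableAt).fun_mul ((hA1 z hz).differentiableAt)),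
        deriv_fun_add (((hB1 z hz).differentiableAt).fun_mul ((hA1 z hz).differentiableAt))
          (((hP z hz).differentiableAt).fun_mul ((hA2 z hz).differentiableAt)),
        deriv_fun_mul ((hB2 z hz).differentiableAt) ((hD z hz).differentiableAt),
        deriv_fun_mul ((hB1 z hz).differentiableAt) ((hA1 z hz).differentiableAt),
        deriv_fun_mul ((hP z hz).differentiableAt) ((hA2 z hz).differentiableAt)])
  have e3 : (fun z => d3 z + (d3 z + (d3 z + z * deriv d3 z))) =ᶠ[𝓝 (0:ℂ)]
      (fun z => ((deriv p2 z * D z + p2 z * d1 z) + (p2 z * d1 z + p1 z * d2 z)) +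
        ((p2 z * d1 z + p1 z * d2 z) + (p1 z * d2 z + P z * d3 z))) :=
    l3.symm.trans (e2.deriv.trans r3)
  have hB : 2 * d3 0 = 3 * p2 0 + 3 * p1 0 * d2 0 := by
    have h3 := e3.eq_of_nhds
    simp only [hd10, hD0, hP0, mul_zero, zero_mul, mul_one, one_mul, add_zero, zero_add] at h3
    linear_combination h3
  have i2D : iteratedDeriv 2 D = d2 := by
    rw [iteratedDeriv_succ, iteratedDeriv_one]
  have i3D : iteratedDeriv 3 D = d3 := by
    rw [iteratedDeriv_succ, iteratedDeriv_succ, iteratedDeriv_one]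
  have i2P : iteratedDeriv 2 P = p2 := by
    rw [iteratedDeriv_succ, iteratedDeriv_one]
  refine ⟨?_, ?_⟩
  · rw [i2D]; exact hA
  · rw [i2D, i3D, i2P]; exact hB

-- ===== chain rule coefficients =====
lemma zero_mem_unitDisk : (0:ℂ) ∈ unitDisk := by
  rw [mem_unitDisk]; simp

lemma comp_coeffs {φ u : ℂ → ℂ} (hφ : AnalyticOnNhd ℂ φ unitDisk)
    (hu : AnalyticOnNhd ℂ u unitDisk) (hu0 : u 0 = 0)
    (hmaps : ∀ z ∈ unitDisk, u z ∈ unitDisk) :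
    deriv (fun z => φ (u z)) 0 = deriv φ 0 * deriv u 0 ∧
      iteratedDeriv 2 (fun z => φ (u z)) 0
        = iteratedDeriv 2 φ 0 * (deriv u 0)^2 + deriv φ 0 * iteratedDeriv 2 u 0 := by
  have hnb : unitDisk ∈ 𝓝 (0:ℂ) := isOpen_ball.mem_nhds zero_mem_unitDisk
  have hchain : ∀ z ∈ unitDisk, deriv (fun w => φ (u w)) z = deriv φ (u z) * deriv u z := by
    intro z hz
    have := deriv_comp (x := z) ((hφ _ (hmaps z hz)).differentiableAt) ((hu z hz).differentiableAt)
    exact this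
  have hfst : deriv (fun z => φ (u z)) 0 = deriv φ 0 * deriv u 0 := by
    rw [hchain 0 zero_mem_unitDisk, hu0]
  refine ⟨hfst, ?_⟩
  have hev : deriv (fun w => φ (u w)) =ᶠ[𝓝 (0:ℂ)] fun z => deriv φ (u z) * deriv u z :=
    Filter.eventuallyEq_of_mem hnb hchain
  have hdiff1 : DifferentiableAt ℂ (fun z => deriv φ (u z)) 0 := by
    have : AnalyticAt ℂ (deriv φ ∘ u) 0 := ((hφ.deriv) _ (hmaps 0 zero_mem_unitDisk)).comp
      (hu 0 zero_mem_unitDisk)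
    exact this.differentiableAt
  have hdiff2 : DifferentiableAt ℂ (deriv u) 0 := ((hu.deriv) 0 zero_mem_unitDisk).differentiableAt
  have h2 : iteratedDeriv 2 (fun z => φ (u z)) 0
      = deriv (fun z => deriv φ (u z) * deriv u z) 0 := by
    rw [iteratedDeriv_succ, iteratedDeriv_one]
    exact hev.deriv_eq
  have h3 : deriv (fun z => deriv φ (u z)) 0 = deriv (deriv φ) (u 0) * deriv u 0 := by
    have := deriv_comp (x := 0) (((hφ.deriv) _ (hmaps 0 zero_mem_unitDisk)).differentiableAt)
      ((hu 0 zero_mem_unitDisk).differentiableAt)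
    exact this
  rw [h2, deriv_fun_mul hdiff1 hdiff2, h3, hu0]
  simp only [iteratedDeriv_succ, iteratedDeriv_zero]
  ring

-- ===== Schwarz lemma, second coefficient =====
lemma mobius_denom_ne {a b : ℂ} (ha : ‖a‖ ≤ 1) (hb : ‖b‖ < 1) :
    1 - (starRingEnd ℂ) b * a ≠ 0 := by
  intro h
  have h1 : (starRingEnd ℂ) b * a = 1 := (sub_eq_zero.mp h).symm
  have h2 : ‖(starRingEnd ℂ) b * a‖ < 1 := by
    rw [norm_mul, RCLike.norm_conj]
    calc ‖b‖ * ‖a‖ ≤ ‖b‖ * 1 := by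
          apply mul_le_mul_of_nonneg_left ha (norm_nonneg _)
      _ < 1 := by simpa using hb
  rw [h1] at h2
  simp at h2

lemma mobius_lt {a b : ℂ} (ha : ‖a‖ < 1) (hb : ‖b‖ < 1) :
    ‖(a - b) / (1 - (starRingEnd ℂ) b * a)‖ < 1 := by
  have hden := mobius_denom_ne ha.le hb
  have hkey : Complex.normSq (1 - (starRingEnd ℂ) b * a) - Complex.normSq (a - b)
      = (1 - Complex.normSq a) * (1 - Complex.normSq b) := by
    simp only [Complex.normSq_apply, Complex.sub_re, Complex.sub_im, Complex.mul_re,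
      Complex.mul_im, Complex.conj_re, Complex.conj_im, Complex.one_re, Complex.one_im]
    ring
  have hA : Complex.normSq a < 1 := by
    rw [← Complex.sq_norm]
    nlinarith [norm_nonneg a]
  have hB : Complex.normSq b < 1 := by
    rw [← Complex.sq_norm]
    nlinarith [norm_nonneg b]
  have hpos : 0 < Complex.normSq (1 - (starRingEnd ℂ) b * a) - Complex.normSq (a - b) := by
    rw [hkey]; nlinarith
  have hdenpos : 0 < ‖1 - (starRingEnd ℂ) b * a‖ := norm_pos_iff.mpr hden
  rw [norm_div, div_lt_one hdenpos]
  have e1 : ‖a - b‖^2 = Complex.normSq (a - b) := by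
    rw [← Complex.sq_norm]
  have e2 : ‖1 - (starRingEnd ℂ) b * a‖^2 = Complex.normSq (1 - (starRingEnd ℂ) b * a) := by
    rw [← Complex.sq_norm]
  nlinarith [norm_nonneg (a - b), hdenpos]

lemma schwarz_bounds {u : ℂ → ℂ} (hu : AnalyticOnNhd ℂ u unitDisk) (hu0 : u 0 = 0)
    (hub : ∀ z ∈ unitDisk, ‖u z‖ < 1) :
    ‖deriv u 0‖ ≤ 1 ∧ ‖iteratedDeriv 2 u 0‖ ≤ 2 * (1 - ‖deriv u 0‖ ^ 2) := by
  have hud : DifferentiableOn ℂ u (ball (0:ℂ) 1) := hu.differentiableOn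
  have hmaps : Set.MapsTo u (ball (0:ℂ) 1) (ball (u 0) 1) := by
    rw [hu0]
    intro z hz
    exact mem_ball_zero_iff.2 (hub z hz)
  set v := dslope u 0 with hv
  have hvle : ∀ z ∈ ball (0:ℂ) 1, ‖v z‖ ≤ 1 := by
    intro z hz
    have := Complex.norm_dslope_le_div_of_mapsTo_ball hud (hmaps.mono_right ball_subset_closedBall) hz
    simpa using this
  have hvdiff : DifferentiableOn ℂ v (ball (0:ℂ) 1) :=
    (differentiableOn_dslope (isOpen_ball.mem_nhds (mem_ball_self one_pos))).mpr hud
  have hv0 : v 0 = deriv u 0 := dslope_same u 0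
  obtain ⟨q, hq⟩ := hu 0 zero_mem_unitDisk
  have hqv : HasFPowerSeriesAt v q.fslope 0 := hq.has_fpower_series_dslope_fslope
  have hderivu : deriv u 0 = q.coeff 1 := hq.deriv
  have hderivv : deriv v 0 = q.coeff 2 := by
    have h := hqv.deriv
    exact h.trans FormalMultilinearSeries.coeff_fslope
  have hit2 : iteratedDeriv 2 u 0 = 2 * q.coeff 2 := by
    have := iteratedDeriv_of_hasFPSAt hq 2
    simpa [Nat.factorial] using this
  have hmain : ‖deriv v 0‖ ≤ 1 - ‖v 0‖ ^ 2 := by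
    rcases lt_or_eq_of_le (hvle 0 (mem_ball_self one_pos)) with hlt | heq1
    · have hvlt : ∀ z ∈ ball (0:ℂ) 1, ‖v z‖ < 1 := by
        intro z hz
        rcases lt_or_eq_of_le (hvle z hz) with h | h
        · exact h
        · exfalso
          have hmax : IsMaxOn (norm ∘ v) (ball (0:ℂ) 1) z := by
            intro y hy
            simp only [Function.comp_apply, Set.mem_setOf_eq]
            rw [h]
            exact hvle y hy
          have hconst := Complex.eqOn_of_isPreconnected_of_isMaxOn_norm
            (convex_ball (0:ℂ) 1).isPreconnected isOpen_ball hvdiff hz hmax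
          have h0eq : v 0 = v z := by
            have := hconst (mem_ball_self one_pos)
            simpa using this
          rw [h0eq, h] at hlt
          exact lt_irrefl _ hlt
      set w := fun z => (v z - v 0) / (1 - (starRingEnd ℂ) (v 0) * v z) with hw
      have hden : ∀ z ∈ ball (0:ℂ) 1, 1 - (starRingEnd ℂ) (v 0) * v z ≠ 0 := by
        intro z hz
        exact mobius_denom_ne (hvle z hz) hlt
      have hwdiff : DifferentiableOn ℂ w (ball (0:ℂ) 1) := by
        apply DifferentiableOn.div
        · exact hvdiff.sub (differentiableOn_const _)
        · exact (differentiableOn_const _).sub ((differentiableOn_const _).mul hvdiff)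
        · exact hden
      have hw0 : w 0 = 0 := by simp [hw]
      have hwmaps' : Set.MapsTo w (ball (0:ℂ) 1) (ball (w 0) 1) := by
        rw [hw0]
        intro z hz
        rw [mem_ball_zero_iff]
        exact mobius_lt (hvlt z hz) hlt
      have hschwarz : ‖deriv w 0‖ ≤ 1 :=
        (Complex.norm_deriv_le_div_of_mapsTo_ball hwdiff (hwmaps'.mono_right ball_subset_closedBall) one_pos).trans (by norm_num)
      have hvd0 : DifferentiableAt ℂ v 0 := hqv.analyticAt.differentiableAt
      have hnum : DifferentiableAt ℂ (fun z => v z - v 0) 0 := hvd0.sub_const _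
      have hden0 : DifferentiableAt ℂ (fun z => 1 - (starRingEnd ℂ) (v 0) * v z) 0 :=
        (differentiableAt_const _).sub ((differentiableAt_const _).mul hvd0)
      have hB0 := hden 0 (mem_ball_self one_pos)
      have hdw : deriv w 0 = deriv v 0 / (1 - (starRingEnd ℂ) (v 0) * v 0) := by
        rw [hw]
        rw [deriv_fun_div hnum hden0 hB0]
        have h1 : deriv (fun z => v z - v 0) 0 = deriv v 0 := by rw [deriv_sub_const]
        rw [h1, sub_self, zero_mul, sub_zero, pow_two]
        rw [mul_div_assoc]
        field_simp
      have hcnv : (1 : ℂ) - (starRingEnd ℂ) (v 0) * v 0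
          = ((1 - Complex.normSq (v 0) : ℝ) : ℂ) := by
        have hmc : (starRingEnd ℂ) (v 0) * v 0 = (Complex.normSq (v 0) : ℂ) := by
          rw [mul_comm, Complex.mul_conj]
        rw [hmc]
        push_cast
        ring
      have hpos : (0:ℝ) < 1 - Complex.normSq (v 0) := by
        have : Complex.normSq (v 0) < 1 := by
          rw [← Complex.sq_norm]
          nlinarith [norm_nonneg (v 0)]
        linarith
      have hnormw : ‖deriv w 0‖ = ‖deriv v 0‖ / (1 - Complex.normSq (v 0)) := by
        rw [hdw, hcnv, norm_div, Complex.norm_real, Real.norm_eq_abs, abs_of_pos hpos]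
      rw [hnormw, div_le_one hpos] at hschwarz
      have hnsq : Complex.normSq (v 0) = ‖v 0‖ ^ 2 := by
        rw [← Complex.sq_norm]
      rw [hnsq] at hschwarz
      linarith
    · have hmax : IsMaxOn (norm ∘ v) (ball (0:ℂ) 1) 0 := by
        intro y hy
        simp only [Function.comp_apply, Set.mem_setOf_eq]
        exact (hvle y hy).trans heq1.symm.le
      have hconst := Complex.eqOn_of_isPreconnected_of_isMaxOn_norm
        (convex_ball (0:ℂ) 1).isPreconnected isOpen_ball hvdiff (mem_ball_self one_pos) hmax
      have hev : v =ᶠ[𝓝 (0:ℂ)] Function.const ℂ (v 0) :=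
        Filter.eventuallyEq_of_mem (isOpen_ball.mem_nhds (mem_ball_self one_pos)) hconst
      have hdv0 : deriv v 0 = 0 := by
        rw [hev.deriv_eq]
        exact deriv_const _ _
      rw [hdv0, norm_zero, heq1]
      norm_num
  constructor
  · rw [← hv0]
    exact hvle 0 (mem_ball_self one_pos)
  · rw [hit2, ← hderivv, ← hv0, norm_mul]
    have h2 : ‖(2:ℂ)‖ = 2 := by norm_num
    rw [h2]
    linarith [hmain]

-- ===== one side of the argument =====
lemma side {lam al be d : ℝ} (hd : 0 ≤ d) {a : ℕ → ℂ} {f φ : ℂ → ℂ} {B : ℕ → ℝ}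
    (hφ : AnalyticOnNhd ℂ φ unitDisk)
    (hφs : ∀ z ∈ unitDisk, HasSum (fun n => (B n : ℂ) * z ^ n) (φ z))
    (hfA : IsInA f a)
    (hnz : ∀ z ∈ unitDisk, z ≠ 0 → Dop lam al be d 0 a z ≠ 0)
    (hsub : Subord (bazFun 0 (Dop lam al be d 0 a)) φ) :
    ∃ c1 c2 : ℂ, ‖c1‖ ≤ 1 ∧ ‖c2‖ ≤ 1 - ‖c1‖^2 ∧
      ((Cdel d 2 : ℝ) : ℂ) * a 2 = ((B 1 : ℝ) : ℂ) * c1 ∧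
      2 * ((Cdel d 3 : ℝ) : ℂ) * a 3 - ((Cdel d 2 : ℝ) : ℂ)^2 * a 2^2
        = ((B 1 : ℝ) : ℂ) * c2 + ((B 2 : ℝ) : ℂ) * c1^2 := by
  obtain ⟨hfan, ha0, ha1, hfs⟩ := hfA
  obtain ⟨M, hM1, hMb⟩ := coeff_bound hfs
  have hDps := Dop_hasFPS (lam := lam) (al := al) (be := be) hd hM1 hMb
  obtain ⟨u, huan, hu0, hub, husub⟩ := hsub
  have hub' : ∀ z ∈ unitDisk, ‖u z‖ < 1 := by
    intro z hz
    exact hub z hz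
  -- φ power series
  obtain ⟨Mp, hMp1, hMpb⟩ := coeff_bound hφs
  have hφps : HasFPowerSeriesOnBall φ
      (FormalMultilinearSeries.ofScalars ℂ (fun n => ((B n : ℝ) : ℂ))) 0
      (ENNReal.ofReal (2:ℝ)⁻¹) := by
    apply hasFPSOB_of_bound φ _ (by norm_num) (by linarith) hMpb
    intro y hy
    refine hφs y (mem_unitDisk.mpr ?_)
    calc ‖y‖ < (2:ℝ)⁻¹ := hy
      _ < 1 := by norm_num
  have hφAt := hφps.hasFPowerSeriesAt
  have hφd1 : deriv φ 0 = ((B 1 : ℝ) : ℂ) :=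
    hφAt.deriv.trans (ofScalars_coeff _ 1)
  have hφd2 : iteratedDeriv 2 φ 0 = 2 * ((B 2 : ℝ) : ℂ) := by
    have h := iteratedDeriv_of_hasFPSAt hφAt 2
    rw [ofScalars_coeff] at h
    simpa [Nat.factorial] using h
  -- D facts
  set D := Dop lam al be d 0 a with hDdef
  have hDAt := hDps.hasFPowerSeriesAt
  have hD0 : D 0 = 0 := Dop_zero lam al be d 0 a
  have hDd1 : deriv D 0 = 1 := by
    have h := hDAt.deriv.trans (ofScalars_coeff _ 1)
    simpa [dcoeff] using h
  have hDit2 : iteratedDeriv 2 D 0 = 2 * (((Cdel d 2 : ℝ) : ℂ) * a 2) := by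
    have h := iteratedDeriv_of_hasFPSAt hDAt 2
    rw [ofScalars_coeff] at h
    simpa [Nat.factorial, dcoeff] using h
  have hDit3 : iteratedDeriv 3 D 0 = 6 * (((Cdel d 3 : ℝ) : ℂ) * a 3) := by
    have h := iteratedDeriv_of_hasFPSAt hDAt 3
    rw [ofScalars_coeff] at h
    rw [h]
    norm_num [Nat.factorial, dcoeff]
  -- small ball
  set ρ : ℝ := min ((2+2*d)⁻¹) 1 with hρdef
  have hρ : 0 < ρ := by
    apply lt_min _ one_pos
    positivity
  have hsubdisk : ball (0:ℂ) ρ ⊆ unitDisk := ball_subset_ball (min_le_right _ _)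
  have hsubE : ball (0:ℂ) ρ ⊆ EMetric.ball (0:ℂ) (ENNReal.ofReal (2+2*d)⁻¹) := by
    intro z hz
    rw [mem_ball, dist_zero_right] at hz
    show edist z 0 < _
    rw [edist_dist, dist_zero_right]
    apply ENNReal.ofReal_lt_ofReal_iff_of_nonneg (norm_nonneg _) |>.mpr
    exact lt_of_lt_of_le hz (min_le_left _ _)
  have hDan : AnalyticOnNhd ℂ D (ball 0 ρ) := fun z hz => hDps.analyticOnNhd z (hsubE hz)
  have hmaps : ∀ z ∈ unitDisk, u z ∈ unitDisk := fun z hz => mem_unitDisk.mpr (hub' z hz)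
  have hPan : AnalyticOnNhd ℂ (fun z => φ (u z)) (ball 0 ρ) := fun z hz =>
    ((hφ _ (hmaps z (hsubdisk hz))).comp (huan z (hsubdisk hz)))
  have heqn : ∀ z ∈ ball (0:ℂ) ρ, z * deriv D z = (fun z => φ (u z)) z * D z := by
    intro z hz
    by_cases hz0 : z = 0
    · subst hz0
      simp [hD0]
    · have hbz := husub z (hsubdisk hz)
      simp only [bazFun, if_neg hz0, Complex.ofReal_zero, Complex.cpow_zero, mul_one] at hbz
      have hDz := hnz z (hsubdisk hz) hz0
      rw [div_eq_iff hDz] at hbz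
      exact hbz
  obtain ⟨hk1, hk2⟩ := key_ode hρ hDan hPan hD0 hDd1 heqn
  obtain ⟨hc1, hc2⟩ := comp_coeffs hφ huan hu0 hmaps
  obtain ⟨hs1, hs2⟩ := schwarz_bounds huan hu0 hub'
  rw [hDit2, hc1, hφd1] at hk1
  rw [hDit3, hDit2, hc2, hc1, hφd2, hφd1] at hk2
  have eq1 : ((Cdel d 2 : ℝ) : ℂ) * a 2 = ((B 1 : ℝ) : ℂ) * deriv u 0 :=
    mul_left_cancel₀ two_ne_zero hk1
  refine ⟨deriv u 0, iteratedDeriv 2 u 0 / 2, hs1, ?_, eq1, ?_⟩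
  · rw [norm_div]
    have h2 : ‖(2:ℂ)‖ = 2 := by norm_num
    rw [h2, div_le_iff₀ (by norm_num : (0:ℝ) < 2)]
    linarith [hs2]
  · linear_combination (1/6 : ℂ) * hk2 - (((Cdel d 2 : ℝ) : ℂ) * a 2) * eq1

theorem cor_2_4 (α β lam δ : ℝ)
    (hα0 : 0 < α) (hα1 : α ≤ 1) (hβ0 : 0 < β) (hβ1 : β ≤ 1)
    (hlam : 0 ≤ lam) (hδ : 0 ≤ δ)
    (B : ℕ → ℝ) (φ : ℂ → ℂ)
    (hφ : AnalyticOnNhd ℂ φ unitDisk)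
    (hφs : ∀ z ∈ unitDisk, HasSum (fun n => (B n : ℂ) * z ^ n) (φ z))
    (hB0 : B 0 = 1) (hB1 : 0 < B 1)
    (f g : ℂ → ℂ) (a b : ℕ → ℂ)
    (hmem : MemB lam α β δ 0 0 φ f g a b)
    (hden : B 1 ^ 2 * (2 * Cdel δ 3 - Cdel δ 2 ^ 2) - (B 2 - B 1) * Cdel δ 2 ^ 2 ≠ 0) :
    ‖a 2‖ ≤ B 1 * Real.sqrt (B 1) /
      Real.sqrt |B 1 ^ 2 * (2 * Cdel δ 3 - Cdel δ 2 ^ 2) - (B 2 - B 1) * Cdel δ 2 ^ 2| ∧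
    ‖a 3‖ ≤ B 1 / (2 * Cdel δ 3) + (B 1 / Cdel δ 2) ^ 2 := by
  obtain ⟨hfA, _, hgA, _, _, hb2, hb3, hnza, hnzb, hsa, hsb⟩ := hmem
  obtain ⟨c1, c2, hc1, hc2, e1, e2⟩ := side hδ hφ hφs hfA hnza hsa
  obtain ⟨d1, d2, hd1, hd2, f1, f2⟩ := side hδ hφ hφs hgA hnzb hsb
  have hH : 0 < Cdel δ 2 := Cdel_pos hδ (by norm_num)
  have hK : 0 < Cdel δ 3 := Cdel_pos hδ (by norm_num)
  rw [hb2] at f1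
  rw [hb2, hb3] at f2
  have hB1ne : ((B 1 : ℝ) : ℂ) ≠ 0 := Complex.ofReal_ne_zero.mpr hB1.ne'
  have hd1c1 : d1 = -c1 := by
    have h : ((B 1 : ℝ):ℂ) * d1 = ((B 1 : ℝ):ℂ) * (-c1) := by
      linear_combination (-1 : ℂ) * f1 - e1
    exact mul_left_cancel₀ hB1ne h
  rw [hd1c1] at f2
  have hd2' : ‖d2‖ ≤ 1 - ‖c1‖^2 := by
    rw [hd1c1, norm_neg] at hd2
    exact hd2
  -- complex identities
  have hX : a 2^2 * ((((4*Cdel δ 3 - 2*(Cdel δ 2)^2)*(B 1)^2 - 2*(B 2)*(Cdel δ 2)^2 : ℝ)):ℂ)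
      = (((B 1)^3 : ℝ):ℂ) * (c2 + d2) := by
    push_cast
    linear_combination ((B 1:ℝ):ℂ)^2 * e2 + ((B 1:ℝ):ℂ)^2 * f2
      - 2*((B 2:ℝ):ℂ)*(((B 1:ℝ):ℂ)*c1 + ((Cdel δ 2:ℝ):ℂ)*(a 2)) * e1
  have hdiff : (4:ℂ) * ((Cdel δ 3 : ℝ):ℂ) * (a 3 - a 2^2) = ((B 1:ℝ):ℂ) * (c2 - d2) := by
    linear_combination e2 - f2
  -- norm identities
  have hn1 : Cdel δ 2 * ‖a 2‖ = B 1 * ‖c1‖ := by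
    have h := congrArg Norm.norm e1
    simpa [norm_mul, Complex.norm_real, Real.norm_eq_abs, abs_of_pos hH, abs_of_pos hB1] using h
  have hnX : ‖a 2‖^2 * |(4*Cdel δ 3 - 2*(Cdel δ 2)^2)*(B 1)^2 - 2*(B 2)*(Cdel δ 2)^2|
      = (B 1)^3 * ‖c2 + d2‖ := by
    have h := congrArg Norm.norm hX
    simp only [norm_mul, norm_pow, Complex.norm_real, Real.norm_eq_abs] at h
    rw [abs_of_pos hB1] at h
    exact h
  have hnd : 4 * Cdel δ 3 * ‖a 3 - a 2^2‖ = B 1 * ‖c2 - d2‖ := by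
    have h := congrArg Norm.norm hdiff
    simpa [norm_mul, Complex.norm_real, Real.norm_eq_abs, abs_of_pos hK, abs_of_pos hB1,
      mul_assoc] using h
  -- bounds on c-data
  have hcd2 : ‖c2 + d2‖ ≤ 2 - 2*‖c1‖^2 := by
    calc ‖c2 + d2‖ ≤ ‖c2‖ + ‖d2‖ := norm_add_le _ _
      _ ≤ (1 - ‖c1‖^2) + (1 - ‖c1‖^2) := add_le_add hc2 hd2'
      _ = 2 - 2*‖c1‖^2 := by ring
  have hcd2' : ‖c2 - d2‖ ≤ 2 := by
    calc ‖c2 - d2‖ ≤ ‖c2‖ + ‖d2‖ := norm_sub_le _ _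
      _ ≤ (1 - ‖c1‖^2) + (1 - ‖c1‖^2) := add_le_add hc2 hd2'
      _ ≤ 2 := by nlinarith [sq_nonneg ‖c1‖]
  have ha2H : ‖a 2‖ ≤ B 1 / Cdel δ 2 := by
    rw [le_div_iff₀ hH]
    calc ‖a 2‖ * Cdel δ 2 = Cdel δ 2 * ‖a 2‖ := by ring
      _ = B 1 * ‖c1‖ := hn1
      _ ≤ B 1 * 1 := by apply mul_le_mul_of_nonneg_left hc1 hB1.le
      _ = B 1 := mul_one _
  constructor
  · -- a 2 bound
    set Dnm : ℝ := B 1 ^ 2 * (2 * Cdel δ 3 - Cdel δ 2 ^ 2) - (B 2 - B 1) * Cdel δ 2 ^ 2 with hDnm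
    set Xr : ℝ := (4*Cdel δ 3 - 2*(Cdel δ 2)^2)*(B 1)^2 - 2*(B 2)*(Cdel δ 2)^2 with hXr
    have habs : 2*|Dnm| ≤ |Xr| + 2*(B 1)*(Cdel δ 2)^2 := by
      have h2d : 2*Dnm = Xr + 2*(B 1)*(Cdel δ 2)^2 := by rw [hDnm, hXr]; ring
      calc 2*|Dnm| = |2*Dnm| := by rw [abs_mul]; norm_num
        _ = |Xr + 2*(B 1)*(Cdel δ 2)^2| := by rw [h2d]
        _ ≤ |Xr| + |2*(B 1)*(Cdel δ 2)^2| := abs_add_le _ _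
        _ = |Xr| + 2*(B 1)*(Cdel δ 2)^2 := by
            have hp : (0:ℝ) < 2*(B 1)*(Cdel δ 2)^2 := by
              have := mul_pos (mul_pos (by norm_num : (0:ℝ) < 2) hB1) (pow_pos hH 2)
              linarith
            rw [abs_of_pos hp]
    have hDnmpos : 0 < |Dnm| := abs_pos.mpr hden
    have hsq : ‖a 2‖^2 ≤ (B 1)^3 / |Dnm| := by
      rw [le_div_iff₀ hDnmpos]
      have key : ‖a 2‖^2 * |Xr| ≤ (B 1)^3 * (2 - 2*‖c1‖^2) := by
        rw [hnX]
        apply mul_le_mul_of_nonneg_left hcd2 (by positivity)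
      have hsqn1 : (Cdel δ 2)^2 * ‖a 2‖^2 = (B 1)^2 * ‖c1‖^2 := by
        linear_combination (Cdel δ 2 * ‖a 2‖ + B 1 * ‖c1‖) * hn1
      have hsqn1' : B 1 * ((Cdel δ 2)^2 * ‖a 2‖^2) = B 1 * ((B 1)^2 * ‖c1‖^2) := by
        rw [hsqn1]
      have hX1 := mul_le_mul_of_nonneg_left habs (sq_nonneg ‖a 2‖)
      linarith [hX1, key, hsqn1']
    calc ‖a 2‖ = Real.sqrt (‖a 2‖^2) := (Real.sqrt_sq (norm_nonneg _)).symm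
      _ ≤ Real.sqrt ((B 1)^3 / |Dnm|) := Real.sqrt_le_sqrt hsq
      _ = Real.sqrt ((B 1)^3) / Real.sqrt |Dnm| := Real.sqrt_div (by positivity) _
      _ = B 1 * Real.sqrt (B 1) / Real.sqrt |Dnm| := by
          rw [show (B 1)^3 = (B 1)^2 * B 1 by ring, Real.sqrt_mul (sq_nonneg _),
            Real.sqrt_sq hB1.le]
  · -- a 3 bound
    have h1 : ‖a 3 - a 2^2‖ ≤ B 1 / (2 * Cdel δ 3) := by
      rw [le_div_iff₀ (by positivity)]
      linarith [hnd, mul_le_mul_of_nonneg_left hcd2' hB1.le, hK]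
    have h2 : ‖a 3‖ ≤ ‖a 3 - a 2^2‖ + ‖a 2^2‖ := by
      calc ‖a 3‖ = ‖(a 3 - a 2^2) + a 2^2‖ := by ring_nf
        _ ≤ ‖a 3 - a 2^2‖ + ‖a 2^2‖ := norm_add_le _ _
    have h3 : ‖a 2^2‖ ≤ (B 1 / Cdel δ 2)^2 := by
      rw [norm_pow]
      apply pow_le_pow_left₀ (norm_nonneg _) ha2H
    linarith
end
end

section
/- (Corollary 2.8) Suppose k = 0 and δ = 0 (so Υₙ = 1 and C(δ,n) = 1 for all n, and Df = f, Dg = g) and let f(z) = z + Σ_{n≥2} aₙ zⁿ belong to the class B_Σ(0, φ). Assume B₁² − (B₂−B₁) ≠ 0. Then |a₂| ≤ B₁·√B₁ / √( |B₁² − (B₂−B₁)| ) and |a₃| ≤ B₁/2 + B₁². -/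
open Complex

noncomputable section

section AuxProofs
open Metric ENNReal



def cser (a : ℕ → ℂ) : FormalMultilinearSeries ℂ ℂ ℂ :=
  fun n => ContinuousMultilinearMap.mkPiRing ℂ (Fin n) (a n)

lemma cser_apply (a : ℕ → ℂ) (n : ℕ) (z : ℂ) : (cser a n fun _ => z) = a n * z ^ n := by
  simp [cser, ContinuousMultilinearMap.mkPiRing_apply, mul_comm]

lemma hasFPS {F : ℂ → ℂ} {a : ℕ → ℂ}
    (h : ∀ z ∈ ball (0:ℂ) 1, HasSum (fun n => a n * z ^ n) (F z)) :
    HasFPowerSeriesOnBall F (cser a) 0 (1/2) := by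
  constructor
  · have hs := h (1/2 : ℂ) (by norm_num [mem_ball, Complex.dist_eq, Complex.norm_def])
    have ht : Filter.Tendsto (fun n => ‖cser a n‖ * ((1/2 : NNReal) : ℝ) ^ n)
        Filter.atTop (nhds 0) := by
      have h2 := hs.summable.tendsto_atTop_zero.norm
      simp only [norm_zero] at h2
      convert h2 using 2 with n
      rw [norm_mul, norm_pow]
      simp [cser, ContinuousMultilinearMap.norm_mkPiRing]
    have := (cser a).le_radius_of_tendsto ht
    simpa using this
  · norm_num
  · intro y hy
    have hy' : y ∈ ball (0:ℂ) 1 := by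
      simp only [EMetric.mem_ball] at hy
      rw [mem_ball, _root_.dist_zero_right]
      calc ‖y‖ = ((‖y‖₊ : ℝ≥0∞)).toReal := by simp
        _ ≤ ((1/2 : ℝ≥0∞)).toReal := by
            apply ENNReal.toReal_mono (by norm_num)
            simpa [edist_zero_right, enorm_eq_nnnorm] using hy.le
        _ < 1 := by norm_num
    have := h y hy'
    simp only [zero_add]
    simp only [cser_apply]
    exact this

lemma coeff_eq_iteratedDeriv {F : ℂ → ℂ} {a : ℕ → ℂ}
    (h : ∀ z ∈ ball (0:ℂ) 1, HasSum (fun n => a n * z ^ n) (F z)) (n : ℕ) :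
    iteratedDeriv n F 0 = n.factorial * a n := by
  have H := (hasFPS h).factorial_smul (1 : ℂ) n
  rw [iteratedDeriv_eq_iteratedFDeriv, ← H, cser_apply]
  simp [nsmul_eq_mul]


lemma moebius_bound (κ w : ℂ) (hκ : ‖κ‖ < 1) (hw : ‖w‖ ≤ 1) :
    ‖w - κ‖ ≤ ‖1 - (starRingEnd ℂ) κ * w‖ := by
  have hid : Complex.normSq (1 - (starRingEnd ℂ) κ * w) - Complex.normSq (w - κ)
      = (1 - Complex.normSq w) * (1 - Complex.normSq κ) := by
    simp only [Complex.normSq_apply, Complex.sub_re, Complex.sub_im, Complex.mul_re,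
      Complex.mul_im, Complex.conj_re, Complex.conj_im, Complex.one_re, Complex.one_im]
    ring
  have h1 : Complex.normSq w ≤ 1 := by
    have := Complex.sq_norm w; nlinarith [norm_nonneg w]
  have h2 : Complex.normSq κ < 1 := by
    have := Complex.sq_norm κ; nlinarith [norm_nonneg κ]
  rw [Complex.norm_def, Complex.norm_def]
  apply Real.sqrt_le_sqrt
  nlinarith

lemma schwarz_coeffs (u : ℂ → ℂ) (hu : AnalyticOnNhd ℂ u (ball 0 1)) (hu0 : u 0 = 0)
    (hub : ∀ z ∈ ball (0:ℂ) 1, ‖u z‖ < 1) :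
    ‖deriv u 0‖ ≤ 1 ∧
      ‖iteratedDeriv 2 u 0 / 2‖ ≤ 1 - ‖deriv u 0‖ ^ 2 := by
  have h0 : (0:ℂ) ∈ ball (0:ℂ) 1 := by simp
  have hdu : DifferentiableOn ℂ u (ball 0 1) :=
    fun z hz => (hu z hz).differentiableAt.differentiableWithinAt
  have maps : Set.MapsTo u (ball 0 1) (ball (u 0) 1) := by
    intro z hz
    rw [hu0, mem_ball_zero_iff]
    exact hub z hz
  set ψ := dslope u 0 with hψ
  have hψle : ∀ z ∈ ball (0:ℂ) 1, ‖ψ z‖ ≤ 1 := by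
    intro z hz
    have := Complex.norm_dslope_le_div_of_mapsTo_ball hdu (maps.mono_right ball_subset_closedBall) hz
    simpa using this
  -- ψ is analytic on the ball
  obtain ⟨p, hp⟩ := hu 0 h0
  have hψ0an : AnalyticAt ℂ ψ 0 := ⟨p.fslope, hp.has_fpower_series_dslope_fslope⟩
  have hψan : ∀ z ∈ ball (0:ℂ) 1, AnalyticAt ℂ ψ z := by
    intro z hz
    rcases eq_or_ne z 0 with rfl | hne
    · exact hψ0an
    · have hslope : AnalyticAt ℂ (fun w => w⁻¹ * (u w - u 0)) z := by
        exact ((analyticAt_id.inv hne).mul (((hu z hz).sub analyticAt_const)))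
      apply hslope.congr
      filter_upwards [eventually_ne_nhds hne] with w hw
      rw [hψ, dslope_of_ne u hw, slope_def_field, sub_zero, div_eq_inv_mul]
  have hψd : DifferentiableOn ℂ ψ (ball 0 1) :=
    fun z hz => (hψan z hz).differentiableAt.differentiableWithinAt
  -- identification of coefficients
  have hc1 : ψ 0 = deriv u 0 := dslope_same u 0
  have hc2 : deriv ψ 0 = iteratedDeriv 2 u 0 / 2 := by
    have hd : deriv ψ 0 = p.fslope.coeff 1 := hp.has_fpower_series_dslope_fslope.deriv
    obtain ⟨r, hr⟩ := hp
    have h2 := hr.factorial_smul (1 : ℂ) 2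
    rw [iteratedDeriv_eq_iteratedFDeriv, ← h2]
    rw [hd, FormalMultilinearSeries.coeff_fslope]
    have : (p 2 fun _ => (1:ℂ)) = p.coeff 2 := by
      rw [FormalMultilinearSeries.apply_eq_pow_smul_coeff]; simp
    rw [this]
    simp [Nat.factorial]
  have habs1 : ‖deriv u 0‖ ≤ 1 := by
    rw [← hc1]
    simpa using hψle 0 h0
  refine ⟨habs1, ?_⟩
  rw [show iteratedDeriv 2 u 0 / 2 = deriv ψ 0 by rw [hc2], ← hc1]
  -- two cases
  rcases eq_or_lt_of_le (by simpa using hψle 0 h0 : ‖ψ 0‖ ≤ 1) with heq1 | hlt1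
  · -- max modulus: ψ constant
    have hmax : IsMaxOn (norm ∘ ψ) (ball (0:ℂ) 1) 0 := by
      intro z hz
      simp only [Function.comp_apply, Set.mem_setOf_eq]
      rw [show ‖ψ 0‖ = 1 by simpa using heq1]
      exact hψle z hz
    have hEq := Complex.eqOn_of_isPreconnected_of_isMaxOn_norm
      (convex_ball (0:ℂ) 1).isPreconnected isOpen_ball hψd h0 hmax
    have : deriv ψ 0 = 0 := by
      have hev : ψ =ᶠ[nhds (0:ℂ)] (fun _ => ψ 0) :=
        Filter.eventuallyEq_of_mem (isOpen_ball.mem_nhds h0) hEq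
      rw [hev.deriv_eq, deriv_const]
    rw [this, heq1]
    simp
  · -- Möbius trick
    set κ := ψ 0 with hκdef
    set D : ℂ → ℂ := fun z => 1 - (starRingEnd ℂ) κ * ψ z with hD
    have hDne : ∀ z ∈ ball (0:ℂ) 1, D z ≠ 0 := by
      intro z hz hzero
      have : ‖(starRingEnd ℂ) κ * ψ z‖ < 1 := by
        rw [norm_mul, Complex.norm_conj]
        calc ‖κ‖ * ‖ψ z‖ ≤ ‖κ‖ * 1 :=
          mul_le_mul_of_nonneg_left (by simpa using hψle z hz) (norm_nonneg κ)
        _ < 1 := by simpa using hlt1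
      rw [hD] at hzero
      simp only [sub_eq_zero] at hzero
      rw [← hzero] at this
      simp at this
    set χ : ℂ → ℂ := fun z => (ψ z - κ) / D z with hχ
    have hχd : DifferentiableOn ℂ χ (ball 0 1) := by
      intro z hz
      exact (((hψd z hz).sub (differentiableWithinAt_const κ)).div
        ((differentiableWithinAt_const _).sub ((differentiableWithinAt_const _).mul (hψd z hz)))
        (hDne z hz))
    have hχ0 : χ 0 = 0 := by simp [hχ, hκdef]
    have hχle : ∀ z ∈ ball (0:ℂ) 1, ‖χ z‖ ≤ 1 := by
      intro z hz
      rw [hχ]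
      simp only [norm_div]
      rcases eq_or_ne (D z) 0 with h | h
      · simp [h]
      · rw [div_le_one (norm_pos_iff.mpr h)]
        exact moebius_bound κ (ψ z) hlt1 (by simpa using hψle z hz)
    -- Schwarz applied to χ
    have hderivχ : ‖deriv χ 0‖ ≤ 1 := by
      have key : ∀ R : ℝ, 1 < R → ‖deriv χ 0‖ ≤ R := by
        intro R hR
        have mapsχ : Set.MapsTo χ (ball 0 1) (ball (χ 0) R) := by
          intro z hz
          rw [hχ0, mem_ball_zero_iff]
          exact lt_of_le_of_lt (hχle z hz) hR
        have := Complex.norm_dslope_le_div_of_mapsTo_ball hχd (mapsχ.mono_right ball_subset_closedBall) h0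
        rw [dslope_same] at this
        simpa using this
      exact le_of_forall_gt_imp_ge_of_dense key
    -- compute deriv χ 0
    have hψdiff0 : DifferentiableAt ℂ ψ 0 := (hψan 0 h0).differentiableAt
    have hNdiff : DifferentiableAt ℂ (fun z => ψ z - κ) 0 := hψdiff0.sub_const κ
    have hDdiff : DifferentiableAt ℂ D 0 :=
      (differentiableAt_const _).sub ((differentiableAt_const _).mul hψdiff0)
    have hD0 : D 0 = 1 - (Complex.normSq κ : ℂ) := by
      rw [hD]
      simp only [← hκdef]
      rw [mul_comm, Complex.mul_conj]
    have hD0ne : D 0 ≠ 0 := hDne 0 h0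
    have hderivval : deriv χ 0 = deriv ψ 0 / D 0 := by
      rw [hχ, deriv_fun_div hNdiff hDdiff hD0ne]
      have h1 : deriv (fun z => ψ z - κ) 0 = deriv ψ 0 := by
        rw [deriv_sub_const]
      have h2 : (fun z => ψ z - κ) 0 = 0 := by simp [← hκdef]
      rw [h1, show ψ 0 - κ = 0 from sub_self _, zero_mul, sub_zero, pow_two]
      rw [mul_div_assoc, div_mul_cancel_left₀ hD0ne]
      rw [div_eq_mul_inv]
    have hsq : ‖κ‖ < 1 := hlt1
    have hnormSqlt : Complex.normSq κ < 1 := by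
      have := Complex.sq_norm κ; nlinarith [norm_nonneg κ]
    have habsD0 : ‖D 0‖ = 1 - Complex.normSq κ := by
      rw [hD0]
      rw [show (1:ℂ) - (Complex.normSq κ : ℂ) = ((1 - Complex.normSq κ : ℝ) : ℂ) by push_cast; ring]
      rw [Complex.norm_real, Real.norm_eq_abs, abs_of_pos (by linarith)]
    have final : ‖deriv ψ 0‖ ≤ 1 - Complex.normSq κ := by
      have := hderivχ
      rw [hderivval, norm_div, habsD0] at this
      rw [div_le_one (by linarith)] at this
      linarith
    calc ‖deriv ψ 0‖ ≤ 1 - Complex.normSq κ := final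
      _ = 1 - ‖κ‖ ^ 2 := by rw [Complex.sq_norm]

lemma key (F u ph : ℂ → ℂ) (A : ℕ → ℂ) (B : ℕ → ℝ)
    (hF : AnalyticOnNhd ℂ F (ball 0 1))
    (hA : ∀ z ∈ ball (0:ℂ) 1, HasSum (fun n => A n * z ^ n) (F z))
    (hA0 : A 0 = 0) (hA1 : A 1 = 1)
    (hφ : AnalyticOnNhd ℂ ph (ball 0 1))
    (hB : ∀ z ∈ ball (0:ℂ) 1, HasSum (fun n => (B n : ℂ) * z ^ n) (ph z))
    (hB0 : B 0 = 1)
    (hu : AnalyticOnNhd ℂ u (ball 0 1)) (hu0 : u 0 = 0)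
    (humem : ∀ z ∈ ball (0:ℂ) 1, u z ∈ ball (0:ℂ) 1)
    (heq : ∀ z ∈ ball (0:ℂ) 1, z * deriv F z = ph (u z) * F z) :
    A 2 = (B 1 : ℂ) * deriv u 0 ∧
      2 * A 3 - A 2 ^ 2 = (B 1 : ℂ) * (iteratedDeriv 2 u 0 / 2) + (B 2 : ℂ) * (deriv u 0) ^ 2 := by
  have h0 : (0:ℂ) ∈ ball (0:ℂ) 1 := by simp
  set h : ℂ → ℂ := ph ∘ u with hh
  have hhan : AnalyticOnNhd ℂ h (ball 0 1) := hφ.comp hu humem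
  have hF1an : AnalyticOnNhd ℂ (deriv F) (ball 0 1) := hF.deriv
  have hF2an : AnalyticOnNhd ℂ (deriv (deriv F)) (ball 0 1) := hF1an.deriv
  have hF3an : AnalyticOnNhd ℂ (deriv (deriv (deriv F))) (ball 0 1) := hF2an.deriv
  have hh1an : AnalyticOnNhd ℂ (deriv h) (ball 0 1) := hhan.deriv
  have hh2an : AnalyticOnNhd ℂ (deriv (deriv h)) (ball 0 1) := hh1an.deriv
  have dF : ∀ z ∈ ball (0:ℂ) 1, DifferentiableAt ℂ F z :=
    fun z hz => (hF z hz).differentiableAt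
  have dF1 : ∀ z ∈ ball (0:ℂ) 1, DifferentiableAt ℂ (deriv F) z :=
    fun z hz => (hF1an z hz).differentiableAt
  have dF2 : ∀ z ∈ ball (0:ℂ) 1, DifferentiableAt ℂ (deriv (deriv F)) z :=
    fun z hz => (hF2an z hz).differentiableAt
  have dF3 : ∀ z ∈ ball (0:ℂ) 1, DifferentiableAt ℂ (deriv (deriv (deriv F))) z :=
    fun z hz => (hF3an z hz).differentiableAt
  have dh : ∀ z ∈ ball (0:ℂ) 1, DifferentiableAt ℂ h z :=
    fun z hz => (hhan z hz).differentiableAt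
  have dh1 : ∀ z ∈ ball (0:ℂ) 1, DifferentiableAt ℂ (deriv h) z :=
    fun z hz => (hh1an z hz).differentiableAt
  have dh2 : ∀ z ∈ ball (0:ℂ) 1, DifferentiableAt ℂ (deriv (deriv h)) z :=
    fun z hz => (hh2an z hz).differentiableAt
  have cF := coeff_eq_iteratedDeriv hA
  have cφ := coeff_eq_iteratedDeriv hB
  have F0 : F 0 = 0 := by
    have := cF 0
    rw [iteratedDeriv_zero] at this
    simpa [hA0] using this
  have F1v : deriv F 0 = 1 := by
    have := cF 1
    rw [iteratedDeriv_one] at this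
    simpa [hA1] using this
  have F2v : deriv (deriv F) 0 = 2 * A 2 := by
    have := cF 2
    rw [show iteratedDeriv 2 F = deriv (deriv F) by
      rw [iteratedDeriv_succ, iteratedDeriv_one]] at this
    simpa [Nat.factorial] using this
  have F3v : deriv (deriv (deriv F)) 0 = 6 * A 3 := by
    have := cF 3
    rw [show iteratedDeriv 3 F = deriv (deriv (deriv F)) by
      rw [iteratedDeriv_succ, iteratedDeriv_succ, iteratedDeriv_one]] at this
    simpa [Nat.factorial] using this
  have φ0 : ph 0 = 1 := by
    have := cφ 0
    rw [iteratedDeriv_zero] at this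
    simpa [hB0] using this
  have φ1v : deriv ph 0 = (B 1 : ℂ) := by
    have := cφ 1
    rw [iteratedDeriv_one] at this
    simpa using this
  have φ2v : deriv (deriv ph) 0 = 2 * (B 2 : ℂ) := by
    have := cφ 2
    rw [show iteratedDeriv 2 ph = deriv (deriv ph) by
      rw [iteratedDeriv_succ, iteratedDeriv_one]] at this
    simpa [Nat.factorial] using this
  have h0v : h 0 = 1 := by
    rw [hh]
    simp only [Function.comp_apply, hu0, φ0]
  have h1onS : ∀ z ∈ ball (0:ℂ) 1, deriv h z = deriv ph (u z) * deriv u z := by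
    intro z hz
    rw [hh]
    exact deriv_comp z ((hφ _ (humem z hz)).differentiableAt) ((hu z hz).differentiableAt)
  have h1v : deriv h 0 = (B 1 : ℂ) * deriv u 0 := by
    rw [h1onS 0 h0, hu0, φ1v]
  have h2v : deriv (deriv h) 0
      = 2 * (B 2 : ℂ) * (deriv u 0) ^ 2 + (B 1 : ℂ) * iteratedDeriv 2 u 0 := by
    have hev : deriv h =ᶠ[nhds (0:ℂ)] (fun z => deriv ph (u z) * deriv u z) :=
      Filter.eventuallyEq_of_mem (isOpen_ball.mem_nhds h0) (fun z hz => h1onS z hz)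
    rw [hev.deriv_eq]
    have d1 : DifferentiableAt ℂ (fun z => deriv ph (u z)) 0 :=
      ((hφ.deriv) (u 0) (humem 0 h0)).differentiableAt.comp 0 ((hu 0 h0).differentiableAt)
    have d2 : DifferentiableAt ℂ (deriv u) 0 := ((hu.deriv) 0 h0).differentiableAt
    rw [deriv_fun_mul d1 d2]
    have e1 : deriv (fun z => deriv ph (u z)) 0 = deriv (deriv ph) (u 0) * deriv u 0 :=
      deriv_comp 0 ((hφ.deriv) (u 0) (humem 0 h0)).differentiableAt
        ((hu 0 h0).differentiableAt)
    rw [e1, hu0, φ2v, φ1v, show iteratedDeriv 2 u = deriv (deriv u) from by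
      rw [iteratedDeriv_succ, iteratedDeriv_one]]
    ring
  have E1 : ∀ z ∈ ball (0:ℂ) 1,
      deriv F z + z * deriv (deriv F) z = deriv h z * F z + h z * deriv F z := by
    intro z hz
    have hev : (fun w => w * deriv F w) =ᶠ[nhds z] (fun w => h w * F w) :=
      Filter.eventuallyEq_of_mem (isOpen_ball.mem_nhds hz) (fun w hw => heq w hw)
    have hd := hev.deriv_eq
    rw [deriv_fun_mul differentiableAt_fun_id (dF1 z hz)] at hd
    rw [deriv_fun_mul (dh z hz) (dF z hz)] at hd
    simpa using hd
  have E2 : ∀ z ∈ ball (0:ℂ) 1,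
      deriv (deriv F) z + (deriv (deriv F) z + z * deriv (deriv (deriv F)) z)
        = (deriv (deriv h) z * F z + deriv h z * deriv F z)
          + (deriv h z * deriv F z + h z * deriv (deriv F) z) := by
    intro z hz
    have hev : (fun w => deriv F w + w * deriv (deriv F) w)
        =ᶠ[nhds z] (fun w => deriv h w * F w + h w * deriv F w) :=
      Filter.eventuallyEq_of_mem (isOpen_ball.mem_nhds hz) (fun w hw => E1 w hw)
    have hd := hev.deriv_eq
    rw [deriv_fun_add (dF1 z hz) (differentiableAt_fun_id.fun_mul (dF2 z hz))] at hd
    rw [deriv_fun_mul differentiableAt_fun_id (dF2 z hz)] at hd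
    rw [deriv_fun_add ((dh1 z hz).fun_mul (dF z hz)) ((dh z hz).fun_mul (dF1 z hz))] at hd
    rw [deriv_fun_mul (dh1 z hz) (dF z hz), deriv_fun_mul (dh z hz) (dF1 z hz)] at hd
    simpa using hd
  have eq2 : 2 * A 2 = deriv h 0 + A 2 := by
    have := E2 0 h0
    rw [F0, F1v, F2v, h0v] at this
    simp only [mul_zero, zero_mul, zero_add, add_zero, mul_one, one_mul] at this
    linear_combination this / 2
  have conc1 : A 2 = (B 1 : ℂ) * deriv u 0 := by
    rw [← h1v]; linear_combination eq2
  have E3 : 3 * deriv (deriv (deriv F)) 0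
      = deriv (deriv h) 0 * deriv F 0 + 2 * (deriv (deriv h) 0 * deriv F 0
        + deriv h 0 * deriv (deriv F) 0)
        + (deriv h 0 * deriv (deriv F) 0 + h 0 * deriv (deriv (deriv F)) 0) := by
    have hev : (fun w => deriv (deriv F) w + (deriv (deriv F) w
          + w * deriv (deriv (deriv F)) w))
        =ᶠ[nhds (0:ℂ)] (fun w => (deriv (deriv h) w * F w + deriv h w * deriv F w)
          + (deriv h w * deriv F w + h w * deriv (deriv F) w)) :=
      Filter.eventuallyEq_of_mem (isOpen_ball.mem_nhds h0) (fun w hw => E2 w hw)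
    have hd := hev.deriv_eq
    rw [deriv_fun_add (dF2 0 h0) ((dF2 0 h0).fun_add (differentiableAt_fun_id.fun_mul (dF3 0 h0)))] at hd
    rw [deriv_fun_add (dF2 0 h0) (differentiableAt_fun_id.fun_mul (dF3 0 h0))] at hd
    rw [deriv_fun_mul differentiableAt_fun_id (dF3 0 h0)] at hd
    rw [deriv_fun_add (((dh2 0 h0).fun_mul (dF 0 h0)).fun_add ((dh1 0 h0).fun_mul (dF1 0 h0)))
      (((dh1 0 h0).fun_mul (dF1 0 h0)).fun_add ((dh 0 h0).fun_mul (dF2 0 h0)))] at hd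
    rw [deriv_fun_add ((dh2 0 h0).fun_mul (dF 0 h0)) ((dh1 0 h0).fun_mul (dF1 0 h0))] at hd
    rw [deriv_fun_add ((dh1 0 h0).fun_mul (dF1 0 h0)) ((dh 0 h0).fun_mul (dF2 0 h0))] at hd
    rw [deriv_fun_mul (dh2 0 h0) (dF 0 h0)] at hd
    rw [deriv_fun_mul (dh1 0 h0) (dF1 0 h0)] at hd
    rw [deriv_fun_mul (dh 0 h0) (dF2 0 h0)] at hd
    rw [F0] at hd
    simp only [deriv_id'', mul_zero, zero_mul, zero_add, add_zero, mul_one, one_mul] at hd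
    linear_combination hd
  refine ⟨conc1, ?_⟩
  rw [F1v, F2v, F3v, h0v] at E3
  have hA2 : deriv h 0 = A 2 := by linear_combination -eq2
  rw [hA2] at E3
  have hh2 : deriv (deriv h) 0 = 4 * A 3 - 2 * A 2 ^ 2 := by linear_combination -E3 / 3
  rw [h2v] at hh2
  linear_combination -hh2 / 2

lemma Dop_eq (lam al be : ℝ) (a : ℕ → ℂ) (f : ℂ → ℂ) (ha0 : a 0 = 0) (ha1 : a 1 = 1)
    (hsum : ∀ z ∈ Metric.ball (0:ℂ) 1, HasSum (fun n => a n * z ^ n) (f z)) :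
    ∀ z ∈ Metric.ball (0:ℂ) 1, Dop lam al be 0 0 a z = f z := by
  intro z hz
  have hcdel : ∀ n : ℕ, 2 ≤ n → Cdel 0 n = 1 := by
    intro n hn
    unfold Cdel
    rw [add_zero, zero_add, Real.Gamma_one, mul_one, div_self]
    exact (Real.Gamma_pos_of_pos (by positivity)).ne'
  have hterm : (fun n : ℕ => if 2 ≤ n then
        ((Ups lam al be 0 n : ℝ) : ℂ) * ((Cdel 0 n : ℝ) : ℂ) * a n * z ^ n else 0)
      = fun n => a n * z ^ n - (if n = 1 then z else 0) := by
    funext n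
    match n with
    | 0 => simp [ha0]
    | 1 => simp [ha1]
    | (m+2) =>
      rw [if_pos (by omega), if_neg (by omega), hcdel (m+2) (by omega)]
      unfold Ups
      norm_num
  have hs : HasSum (fun n => a n * z ^ n - (if n = 1 then z else 0)) (f z - z) :=
    (hsum z hz).sub (hasSum_ite_eq 1 z)
  unfold Dop
  rw [hterm, hs.tsum_eq]
  ring

end AuxProofs

theorem cor_2_8 (α β lam : ℝ)
    (hα0 : 0 < α) (hα1 : α ≤ 1) (hβ0 : 0 < β) (hβ1 : β ≤ 1)
    (hlam : 0 ≤ lam) 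
    (B : ℕ → ℝ) (φ : ℂ → ℂ)
    (hφ : AnalyticOnNhd ℂ φ unitDisk)
    (hφs : ∀ z ∈ unitDisk, HasSum (fun n => (B n : ℂ) * z ^ n) (φ z))
    (hB0 : B 0 = 1) (hB1 : 0 < B 1)
    (f g : ℂ → ℂ) (a b : ℕ → ℂ)
    (hmem : MemB lam α β 0 0 0 φ f g a b)
    (hden : B 1 ^ 2 - (B 2 - B 1) ≠ 0) :
    ‖a 2‖ ≤ B 1 * Real.sqrt (B 1) / Real.sqrt |B 1 ^ 2 - (B 2 - B 1)| ∧
    ‖a 3‖ ≤ B 1 / 2 + B 1 ^ 2 := by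
  obtain ⟨⟨hfan, ha0, ha1, hasum⟩, hfinj, ⟨hgan, hb0, hb1, hbsum⟩, hginj, hinv,
    hb2, hb3, hDa, hDb, hsub1, hsub2⟩ := hmem
  have hUD : unitDisk = Metric.ball (0:ℂ) 1 := rfl
  rw [hUD] at hfan hgan hφ
  simp only [hUD] at hasum hbsum hφs hDa hDb
  have hB1C : ((B 1 : ℝ) : ℂ) ≠ 0 := by
    exact_mod_cast (Complex.ofReal_ne_zero).mpr hB1.ne'
  -- process one subordination side
  have main : ∀ (F : ℂ → ℂ) (A : ℕ → ℂ), AnalyticOnNhd ℂ F (Metric.ball 0 1) →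
      (∀ z ∈ Metric.ball (0:ℂ) 1, HasSum (fun n => A n * z ^ n) (F z)) →
      A 0 = 0 → A 1 = 1 →
      (∀ z ∈ Metric.ball (0:ℂ) 1, z ≠ 0 → Dop lam α β 0 0 A z ≠ 0) →
      Subord (bazFun 0 (Dop lam α β 0 0 A)) φ →
      ∃ w1 w2 : ℂ, ‖w1‖ ≤ 1 ∧ ‖w2‖ ≤ 1 - ‖w1‖ ^ 2 ∧
        A 2 = (B 1 : ℂ) * w1 ∧
        2 * A 3 - A 2 ^ 2 = (B 1 : ℂ) * w2 + (B 2 : ℂ) * w1 ^ 2 := by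
    intro F A hFan hAsum hA0 hA1 hDne hsubord
    obtain ⟨u, huan, hu0, hub, hueq⟩ := hsubord
    rw [hUD] at huan
    simp only [hUD] at hub hueq
    have humem : ∀ z ∈ Metric.ball (0:ℂ) 1, u z ∈ Metric.ball (0:ℂ) 1 := by
      intro z hz
      rw [mem_ball_zero_iff]
      exact hub z hz
    have hDeq := Dop_eq lam α β A F hA0 hA1 hAsum
    have heqF : ∀ z ∈ Metric.ball (0:ℂ) 1, z * deriv F z = φ (u z) * F z := by
      intro z hz
      rcases eq_or_ne z 0 with rfl | hz0
      · have hF0 : F 0 = 0 := by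
          have := coeff_eq_iteratedDeriv hAsum 0
          rw [iteratedDeriv_zero] at this
          simpa [hA0] using this
        rw [hF0]
        ring
      · have hbaz := hueq z hz
        unfold bazFun at hbaz
        rw [if_neg hz0] at hbaz
        rw [Complex.ofReal_zero, Complex.cpow_zero, mul_one] at hbaz
        have hDd : deriv (Dop lam α β 0 0 A) z = deriv F z :=
          Filter.EventuallyEq.deriv_eq
            (Filter.eventuallyEq_of_mem (Metric.isOpen_ball.mem_nhds hz)
              (fun w hw => hDeq w hw))
        have hFz : F z ≠ 0 := by
          rw [← hDeq z hz]
          exact hDne z hz hz0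
        rw [hDd, hDeq z hz] at hbaz
        exact (div_eq_iff hFz).mp hbaz
    obtain ⟨k1, k2⟩ := key F u φ A B hFan hAsum hA0 hA1 hφ hφs hB0
      huan hu0 humem heqF
    obtain ⟨s1, s2⟩ := schwarz_coeffs u huan hu0 hub
    exact ⟨deriv u 0, iteratedDeriv 2 u 0 / 2, s1, s2, k1, k2⟩
  obtain ⟨c1, c2, hc1le, hc2le, k1, k2⟩ := main f a hfan hasum ha0 ha1 hDa hsub1
  obtain ⟨d1, d2, hd1le, hd2le, k3, k4⟩ := main g b hgan hbsum hb0 hb1 hDb hsub2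
  rw [hb2] at k3
  rw [hb2, hb3] at k4
  -- derived complex identities
  have hd1c : d1 = -c1 := by
    have h1 : (B 1 : ℂ) * d1 = (B 1 : ℂ) * (-c1) := by
      rw [← k3, k1]; ring
    exact mul_left_cancel₀ hB1C h1
  have hc1 : c1 = a 2 / (B 1 : ℂ) := by
    rw [k1]; field_simp
  have hsum0 : d1 + c1 = 0 := by rw [hd1c]; ring
  have k4s : 3 * a 2 ^ 2 - 2 * a 3 = (B 1 : ℂ) * d2 + (B 2 : ℂ) * d1 ^ 2 := by
    linear_combination k4
  have sum2 : 2 * a 2 ^ 2 = (B 1 : ℂ) * (c2 + d2) + 2 * (B 2 : ℂ) * c1 ^ 2 := by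
    have hd1sq : d1 ^ 2 = c1 ^ 2 := by rw [hd1c]; ring
    linear_combination k2 + k4s + (B 2 : ℂ) * hd1sq
  have idc : 2 * a 2 ^ 2 * ((B 1 ^ 2 - B 2 : ℝ) : ℂ) = ((B 1 : ℂ))^3 * (c2 + d2) := by
    push_cast
    linear_combination ((B 1 : ℂ))^2 * sum2 - 2 * (B 2 : ℂ) * (a 2 + (B 1 : ℂ) * c1) * k1
  have ida : a 3 = a 2 ^ 2 + (B 1 : ℂ) * (c2 - d2) / 4 := by
    linear_combination k2 / 4 - k4s / 4 - (B 2 : ℂ) * (d1 - c1) / 4 * hsum0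
  -- pass to absolute values
  set x := ‖a 2‖ with hxdef
  set p := ‖c1‖ with hpdef
  have hp1 : ‖d1‖ = p := by rw [hd1c, norm_neg]
  have hxp : x = B 1 * p := by
    rw [hxdef, k1, norm_mul, Complex.norm_real, Real.norm_eq_abs, abs_of_pos hB1]
  have habs2 : 2 * x ^ 2 * |B 1 ^ 2 - B 2| = (B 1) ^ 3 * ‖c2 + d2‖ := by
    have := congrArg norm idc
    rw [norm_mul, norm_mul, norm_mul, norm_pow, norm_pow, Complex.norm_real,
      Complex.norm_real, Real.norm_eq_abs, Real.norm_eq_abs, abs_of_pos hB1, Complex.norm_two] at this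
    exact this
  have hcd : ‖c2 + d2‖ ≤ 2 - 2 * p ^ 2 := by
    calc ‖c2 + d2‖ ≤ ‖c2‖ + ‖d2‖ := norm_add_le _ _
      _ ≤ (1 - p ^ 2) + (1 - p ^ 2) := by
          have h2 : ‖d2‖ ≤ 1 - p ^ 2 := by rw [← hp1]; exact hd2le
          exact add_le_add hc2le h2
      _ = 2 - 2 * p ^ 2 := by ring
  have hppos : 0 ≤ p := norm_nonneg _
  have hxpos : 0 ≤ x := norm_nonneg _
  -- main quadratic bound
  have hkey : x ^ 2 * (|B 1 ^ 2 - B 2| + B 1) ≤ B 1 ^ 3 := by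
    have h1 : 2 * x ^ 2 * |B 1 ^ 2 - B 2| ≤ B 1 ^ 3 * (2 - 2 * p ^ 2) := by
      rw [habs2]
      apply mul_le_mul_of_nonneg_left hcd (by positivity)
    have hx2 : x ^ 2 = B 1 ^ 2 * p ^ 2 := by rw [hxp]; ring
    nlinarith [hB1, sq_nonneg p]
  have hDle : |B 1 ^ 2 - (B 2 - B 1)| ≤ |B 1 ^ 2 - B 2| + B 1 := by
    have h1 : B 1 ^ 2 - (B 2 - B 1) = (B 1 ^ 2 - B 2) + B 1 := by ring
    rw [h1]
    calc |(B 1 ^ 2 - B 2) + B 1| ≤ |B 1 ^ 2 - B 2| + |B 1| := abs_add_le _ _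
      _ = |B 1 ^ 2 - B 2| + B 1 := by rw [abs_of_pos hB1]
  have hDpos : 0 < |B 1 ^ 2 - (B 2 - B 1)| := abs_pos.mpr hden
  constructor
  · -- bound for |a 2|
    have hxsq : x ^ 2 ≤ B 1 ^ 3 / |B 1 ^ 2 - (B 2 - B 1)| := by
      rw [le_div_iff₀ hDpos]
      calc x ^ 2 * |B 1 ^ 2 - (B 2 - B 1)| ≤ x ^ 2 * (|B 1 ^ 2 - B 2| + B 1) := by
            apply mul_le_mul_of_nonneg_left hDle (by positivity)
        _ ≤ B 1 ^ 3 := hkey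
    have hx : x ≤ Real.sqrt (B 1 ^ 3 / |B 1 ^ 2 - (B 2 - B 1)|) := by
      rw [show x = Real.sqrt (x ^ 2) from (Real.sqrt_sq hxpos).symm]
      exact Real.sqrt_le_sqrt hxsq
    calc x ≤ Real.sqrt (B 1 ^ 3 / |B 1 ^ 2 - (B 2 - B 1)|) := hx
      _ = Real.sqrt (B 1 ^ 3) / Real.sqrt |B 1 ^ 2 - (B 2 - B 1)| := by
          rw [Real.sqrt_div (by positivity)]
      _ = B 1 * Real.sqrt (B 1) / Real.sqrt |B 1 ^ 2 - (B 2 - B 1)| := by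
          congr 1
          rw [show B 1 ^ 3 = B 1 ^ 2 * B 1 from by ring, Real.sqrt_mul (by positivity),
            Real.sqrt_sq hB1.le]
  · -- bound for |a 3|
    have hy : ‖a 3‖ ≤ x ^ 2 + B 1 * (2 - 2 * p ^ 2) / 4 := by
      rw [ida]
      calc ‖a 2 ^ 2 + (B 1 : ℂ) * (c2 - d2) / 4‖
          ≤ ‖a 2 ^ 2‖ + ‖(B 1 : ℂ) * (c2 - d2) / 4‖ :=
            norm_add_le _ _
        _ = x ^ 2 + B 1 * ‖c2 - d2‖ / 4 := by
            rw [norm_pow, norm_div, norm_mul, Complex.norm_real, Real.norm_eq_abs, abs_of_pos hB1]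
            norm_num [hxdef]
        _ ≤ x ^ 2 + B 1 * (2 - 2 * p ^ 2) / 4 := by
            have : ‖c2 - d2‖ ≤ 2 - 2 * p ^ 2 := by
              have h1 : ‖c2 - d2‖ ≤ ‖c2‖ + ‖d2‖ := by
                simpa using norm_sub_le c2 d2
              have h2 : ‖d2‖ ≤ 1 - p ^ 2 := by rw [← hp1]; exact hd2le
              linarith
            have hB1nn : (0:ℝ) ≤ B 1 := hB1.le
            nlinarith
    have hple : p ≤ 1 := hc1le
    have hx2 : x ^ 2 = B 1 ^ 2 * p ^ 2 := by rw [hxp]; ring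
    have hp2 : p ^ 2 ≤ 1 := pow_le_one₀ hppos hple
    have h4 : B 1 ^ 2 * p ^ 2 ≤ B 1 ^ 2 := mul_le_of_le_one_right (sq_nonneg _) hp2
    have h5 : 0 ≤ B 1 * p ^ 2 := by positivity
    linarith
end
end

section
/- (Corollary 2.9) Suppose k = 0 and δ = 0 (so Υₙ = 1 and C(δ,n) = 1 for all n, and Df = f, Dg = g) and let f(z) = z + Σ_{n≥2} aₙ zⁿ belong to the class B_Σ(1, φ). Assume 3B₁² − 4(B₂−B₁) ≠ 0. Then |a₂| ≤ B₁·√B₁ / √( |3B₁² − 4(B₂−B₁)| ) and |a₃| ≤ B₁/3 + (B₁/2)². -/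
open Complex

noncomputable section

open Metric

lemma aux_series_eq {c : ℕ → ℂ} (y : ℂ) :
    (fun n => (FormalMultilinearSeries.ofScalars ℂ c n) fun _ => y) = fun n => c n * y ^ n := by
  funext n
  rw [FormalMultilinearSeries.ofScalars_apply_eq, smul_eq_mul]

lemma aux_hasFPS {c : ℕ → ℂ} {F : ℂ → ℂ}
    (h : ∀ z ∈ unitDisk, HasSum (fun n => c n * z ^ n) (F z)) :
    HasFPowerSeriesOnBall F (FormalMultilinearSeries.ofScalars ℂ c) 0 1 := by
  constructor
  · refine ENNReal.le_of_forall_nnreal_lt fun r hr => ?_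
    apply FormalMultilinearSeries.le_radius_of_summable_norm
    have hrd : (r : ℂ) ∈ unitDisk := by
      simp only [unitDisk, mem_ball, dist_zero_right]
      simpa using hr
    have hs := (h _ hrd).summable
    rw [← summable_norm_iff] at hs
    apply hs.congr
    intro n
    rw [FormalMultilinearSeries.ofScalars_norm]
    simp [norm_mul, norm_pow]
  · exact one_pos
  · intro y hy
    have hyd : y ∈ unitDisk := by
      simp only [unitDisk, mem_ball, dist_zero_right]
      simpa [← ofReal_norm, ENNReal.ofReal_lt_one] using hy
    rw [zero_add, aux_series_eq]
    exact h y hyd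

lemma aux_iteratedDeriv {c : ℕ → ℂ} {F : ℂ → ℂ}
    (h : ∀ z ∈ unitDisk, HasSum (fun n => c n * z ^ n) (F z)) (n : ℕ) :
    iteratedDeriv n F 0 = (Nat.factorial n : ℂ) * c n := by
  have H := (aux_hasFPS h).factorial_smul (1 : ℂ) n
  rw [iteratedDeriv_eq_iteratedFDeriv, ← H]
  rw [FormalMultilinearSeries.ofScalars_apply_eq]
  simp [smul_eq_mul]

lemma aux_deriv1 {c : ℕ → ℂ} {F : ℂ → ℂ}
    (h : ∀ z ∈ unitDisk, HasSum (fun n => c n * z ^ n) (F z)) :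
    deriv F 0 = c 1 := by
  have := aux_iteratedDeriv h 1
  rwa [iteratedDeriv_one, Nat.factorial_one, Nat.cast_one, one_mul] at this

lemma aux_deriv2 {c : ℕ → ℂ} {F : ℂ → ℂ}
    (h : ∀ z ∈ unitDisk, HasSum (fun n => c n * z ^ n) (F z)) :
    deriv (deriv F) 0 = 2 * c 2 := by
  have := aux_iteratedDeriv h 2
  rwa [show (2 : ℕ) = 1 + 1 from rfl, iteratedDeriv_succ, iteratedDeriv_one] at this

lemma aux_deriv3 {c : ℕ → ℂ} {F : ℂ → ℂ}
    (h : ∀ z ∈ unitDisk, HasSum (fun n => c n * z ^ n) (F z)) :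
    deriv (deriv (deriv F)) 0 = 6 * c 3 := by
  have := aux_iteratedDeriv h 3
  rwa [show (3 : ℕ) = 1 + 1 + 1 from rfl, iteratedDeriv_succ, iteratedDeriv_succ,
    iteratedDeriv_one, show ((Nat.factorial (1+1+1) : ℂ)) = 6 by norm_num [Nat.factorial]] at this

lemma analyticAt_deriv {v : ℂ → ℂ} (h : AnalyticAt ℂ v 0) : AnalyticAt ℂ (deriv v) 0 := by
  have : AnalyticOnNhd ℂ v ({0} : Set ℂ) := fun z hz => by
    rw [Set.mem_singleton_iff] at hz; rwa [hz]
  exact this.deriv 0 rfl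

lemma mobius_abs_le {κ x : ℂ} (hκ : ‖κ‖ ≤ 1) (hx : ‖x‖ ≤ 1) :
    ‖x - κ‖ ≤ ‖1 - (starRingEnd ℂ) κ * x‖ := by
  have h1 : Complex.normSq (1 - (starRingEnd ℂ) κ * x) - Complex.normSq (x - κ)
      = (1 - Complex.normSq κ) * (1 - Complex.normSq x) := by
    simp only [Complex.normSq_apply, Complex.sub_re, Complex.sub_im, Complex.mul_re,
      Complex.mul_im, Complex.one_re, Complex.one_im, Complex.conj_re, Complex.conj_im]
    ring
  have hκ2 : Complex.normSq κ ≤ 1 := by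
    rw [← Complex.sq_norm]; nlinarith [norm_nonneg κ]
  have hx2 : Complex.normSq x ≤ 1 := by
    rw [← Complex.sq_norm]; nlinarith [norm_nonneg x]
  have h2 : Complex.normSq (x - κ) ≤ Complex.normSq (1 - (starRingEnd ℂ) κ * x) := by
    nlinarith
  have := Real.sqrt_le_sqrt h2
  rwa [← Complex.norm_def, ← Complex.norm_def] at this

lemma schwarz_pick_zero {v : ℂ → ℂ}
    (hvd : DifferentiableOn ℂ v (ball (0:ℂ) 1))
    (hv1 : ∀ z ∈ ball (0:ℂ) 1, ‖v z‖ ≤ 1) :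
    ‖deriv v 0‖ ≤ 1 - ‖v 0‖ ^ 2 := by
  have h0 : (0:ℂ) ∈ ball (0:ℂ) 1 := by simp
  set κ := v 0 with hκdef
  have hκ1 : ‖κ‖ ≤ 1 := hv1 0 h0
  rcases eq_or_lt_of_le hκ1 with heq | hlt
  · -- |v 0| = 1 : maximum principle, v is constant
    have hmax : IsMaxOn (norm ∘ v) (ball (0:ℂ) 1) 0 := by
      intro z hz
      simp only [Function.comp_apply, Set.mem_setOf_eq, ← hκdef]
      rw [heq]
      exact hv1 z hz
    have hconst := Complex.eqOn_of_isPreconnected_of_isMaxOn_norm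
      (convex_ball (0:ℂ) 1).isPreconnected isOpen_ball hvd h0 hmax
    have hev : v =ᶠ[nhds (0:ℂ)] (fun _ => v 0) := by
      filter_upwards [isOpen_ball.mem_nhds h0] with z hz using hconst hz
    rw [hev.deriv_eq, deriv_const, heq]
    simp
  · -- |v 0| < 1 : Möbius shift
    set D : ℂ → ℂ := fun z => 1 - (starRingEnd ℂ) κ * v z with hD
    have hDne : ∀ z ∈ ball (0:ℂ) 1, D z ≠ 0 := by
      intro z hz h
      have habs : ‖(starRingEnd ℂ) κ * v z‖ < 1 := by
        rw [norm_mul, Complex.norm_conj]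
        calc ‖κ‖ * ‖v z‖ ≤ ‖κ‖ * 1 :=
          mul_le_mul_of_nonneg_left (hv1 z hz) (norm_nonneg κ)
        _ < 1 := by rwa [mul_one]
      rw [sub_eq_zero] at h
      rw [← h] at habs
      simp at habs
    set w : ℂ → ℂ := fun z => (v z - κ) / D z with hw
    have hwd : DifferentiableOn ℂ w (ball (0:ℂ) 1) := by
      apply DifferentiableOn.div
      · exact hvd.sub_const κ
      · exact (differentiableOn_const _).sub ((differentiableOn_const _).mul hvd)
      · exact hDne
    have hw0 : w 0 = 0 := by simp [hw, hκdef]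
    have hwb : ∀ z ∈ ball (0:ℂ) 1, ‖w z‖ ≤ 1 := by
      intro z hz
      rw [hw]
      simp only [norm_div]
      rw [div_le_one_iff]
      left
      exact ⟨norm_pos_iff.mpr (hDne z hz), mobius_abs_le hκ1 (hv1 z hz)⟩
    have hwder : ‖deriv w 0‖ ≤ 1 := by
      apply le_of_forall_pos_le_add
      intro ε hε
      have hmaps : Set.MapsTo w (ball (0:ℂ) 1) (ball (w 0) (1 + ε)) := by
        intro z hz
        rw [hw0, mem_ball_zero_iff]
        calc ‖w z‖ ≤ 1 := hwb z hz
        _ < 1 + ε := by linarith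
      have := Complex.norm_deriv_le_div_of_mapsTo_ball hwd (hmaps.mono_right ball_subset_closedBall) one_pos
      rwa [div_one] at this
    have hvd0 : DifferentiableAt ℂ v 0 := hvd.differentiableAt (isOpen_ball.mem_nhds h0)
    have hnsq : Complex.normSq κ < 1 := by
      rw [← Complex.sq_norm]; nlinarith [norm_nonneg κ]
    have hsne : (1:ℂ) - (Complex.normSq κ : ℂ) ≠ 0 := by
      intro h
      rw [sub_eq_zero] at h
      have := congrArg Complex.re h
      simp at this
      linarith
    have hderivD : deriv D 0 = - ((starRingEnd ℂ) κ * deriv v 0) := by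
      rw [hD, deriv_const_sub, deriv_const_mul _ hvd0]
    have hwder0 : deriv w 0 = deriv v 0 / (1 - (Complex.normSq κ : ℂ)) := by
      rw [hw]
      rw [deriv_fun_div (d := D) (hvd0.sub_const κ)
        ((differentiableAt_const _).sub ((differentiableAt_const _).mul hvd0)) (hDne 0 h0)]
      rw [deriv_sub_const, hderivD]
      simp only [hD, ← hκdef]
      rw [sub_self, zero_mul, sub_zero, ← Complex.normSq_eq_conj_mul_self]
      field_simp
    have habs : ‖deriv v 0‖ = ‖deriv w 0‖ * (1 - Complex.normSq κ) := by
      have hh : deriv v 0 = deriv w 0 * (1 - (Complex.normSq κ : ℂ)) := by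
        rw [hwder0, div_mul_cancel₀ _ hsne]
      rw [hh, norm_mul]
      congr 1
      rw [show ((1:ℂ) - (Complex.normSq κ : ℂ)) = ((1 - Complex.normSq κ : ℝ) : ℂ) by push_cast; ring]
      rw [Complex.norm_real, Real.norm_eq_abs, abs_of_pos (by linarith)]
    rw [habs, Complex.sq_norm]
    calc ‖deriv w 0‖ * (1 - Complex.normSq κ) ≤ 1 * (1 - Complex.normSq κ) :=
      mul_le_mul_of_nonneg_right hwder (by linarith)
    _ = 1 - Complex.normSq κ := one_mul _

lemma aux_schwarz {u : ℂ → ℂ} (hu : AnalyticOnNhd ℂ u unitDisk) (hu0 : u 0 = 0)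
    (hub : ∀ z ∈ unitDisk, ‖u z‖ < 1) :
    ‖deriv u 0‖ ≤ 1 ∧
    ‖deriv (deriv u) 0‖ ≤ 2 * (1 - ‖deriv u 0‖ ^ 2) := by
  have h0 : (0:ℂ) ∈ ball (0:ℂ) 1 := by simp
  have hd : DifferentiableOn ℂ u (ball (0:ℂ) 1) :=
    fun z hz => ((hu z hz).differentiableAt).differentiableWithinAt
  set v := dslope u 0 with hvdef
  have hvd : DifferentiableOn ℂ v (ball (0:ℂ) 1) :=
    (differentiableOn_dslope (isOpen_ball.mem_nhds h0)).mpr hd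
  have hmaps : Set.MapsTo u (ball (0:ℂ) 1) (ball (u 0) 1) := by
    intro z hz
    rw [hu0, mem_ball_zero_iff]
    exact hub z hz
  have hv1 : ∀ z ∈ ball (0:ℂ) 1, ‖v z‖ ≤ 1 := by
    intro z hz
    have := Complex.norm_dslope_le_div_of_mapsTo_ball hd (hmaps.mono_right ball_subset_closedBall) hz
    rwa [div_one] at this
  have hv0 : v 0 = deriv u 0 := dslope_same u 0
  have hva : AnalyticAt ℂ v 0 := by
    obtain ⟨p, hp⟩ := hu 0 h0
    exact hp.has_fpower_series_dslope_fslope.analyticAt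
  have hueq : u = fun z => z * v z := by
    funext z
    have := sub_smul_dslope u 0 z
    rw [sub_zero, smul_eq_mul, hu0, sub_zero] at this
    rw [← this]
  have hder1 : ‖deriv u 0‖ ≤ 1 := by
    rw [← hv0]; exact hv1 0 h0
  have hpick : ‖deriv v 0‖ ≤ 1 - ‖v 0‖ ^ 2 :=
    schwarz_pick_zero hvd hv1
  -- second derivative of u
  have hdd : deriv (deriv u) 0 = 2 * deriv v 0 := by
    have hev : deriv u =ᶠ[nhds (0:ℂ)] fun z => v z + z * deriv v z := by
      filter_upwards [hva.eventually_analyticAt] with z hz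
      have h1 : HasDerivAt (fun w => w * v w) (1 * v z + z * deriv v z) z :=
        (hasDerivAt_id z).mul hz.differentiableAt.hasDerivAt
      rw [hueq]
      rw [h1.deriv]
      ring
    rw [hev.deriv_eq]
    have h2 : HasDerivAt (fun z => v z + z * deriv v z)
        (deriv v 0 + (1 * deriv v 0 + 0 * deriv (deriv v) 0)) 0 :=
      (hva.differentiableAt.hasDerivAt).add
        ((hasDerivAt_id 0).mul (analyticAt_deriv hva).differentiableAt.hasDerivAt)
    rw [h2.deriv]
    ring
  refine ⟨hder1, ?_⟩
  rw [hdd, norm_mul, ← hv0]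
  have h2abs : ‖(2:ℂ)‖ = 2 := by
    rw [show (2:ℂ) = ((2:ℝ):ℂ) by norm_num, Complex.norm_real, Real.norm_eq_abs]
    norm_num
  rw [h2abs]
  linarith [hpick]

lemma aux_chain {φ u F : ℂ → ℂ}
    (hφ : AnalyticOnNhd ℂ φ unitDisk)
    (hu : AnalyticOnNhd ℂ u unitDisk)
    (humem : ∀ z ∈ unitDisk, u z ∈ unitDisk)
    (hu0 : u 0 = 0)
    (hF : ∀ z ∈ unitDisk, F z = φ (u z)) :
    deriv F 0 = deriv φ 0 * deriv u 0 ∧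
    deriv (deriv F) 0 = deriv (deriv φ) 0 * (deriv u 0)^2 + deriv φ 0 * deriv (deriv u) 0 := by
  have hop : IsOpen unitDisk := Metric.isOpen_ball
  have h0 : (0:ℂ) ∈ unitDisk := by simp [unitDisk]
  have hderiv_on : ∀ z ∈ unitDisk, deriv F z = deriv φ (u z) * deriv u z := by
    intro z hz
    have hev : F =ᶠ[nhds z] fun w => φ (u w) := by
      filter_upwards [hop.mem_nhds hz] with w hw using hF w hw
    rw [hev.deriv_eq]
    have hcomp : HasDerivAt (φ ∘ u) (deriv φ (u z) * deriv u z) z :=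
      HasDerivAt.comp z ((hφ (u z) (humem z hz)).differentiableAt.hasDerivAt)
        ((hu z hz).differentiableAt.hasDerivAt)
    exact hcomp.deriv
  constructor
  · rw [hderiv_on 0 h0, hu0]
  · have hev2 : deriv F =ᶠ[nhds (0:ℂ)] fun z => deriv φ (u z) * deriv u z := by
      filter_upwards [hop.mem_nhds h0] with z hz using hderiv_on z hz
    rw [hev2.deriv_eq]
    have hφ' : AnalyticOnNhd ℂ (deriv φ) unitDisk := hφ.deriv
    have hu' : AnalyticOnNhd ℂ (deriv u) unitDisk := hu.deriv
    have hφ'0 : HasDerivAt (deriv φ) (deriv (deriv φ) (u 0)) (u 0) := by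
      rw [hu0]
      exact (hφ' 0 h0).differentiableAt.hasDerivAt
    have hu'0 : HasDerivAt u (deriv u 0) 0 := (hu 0 h0).differentiableAt.hasDerivAt
    have h1 : HasDerivAt (fun z => deriv φ (u z)) (deriv (deriv φ) (u 0) * deriv u 0) 0 :=
      HasDerivAt.comp 0 hφ'0 hu'0
    have h2 : HasDerivAt (deriv u) (deriv (deriv u) 0) 0 :=
      (hu' 0 h0).differentiableAt.hasDerivAt
    have h3 : HasDerivAt (fun z => deriv φ (u z) * deriv u z) _ 0 := h1.mul h2
    rw [h3.deriv, hu0]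
    ring

lemma aux_Dop_eq {a : ℕ → ℂ} {f : ℂ → ℂ} (lam al be : ℝ)
    (ha0 : a 0 = 0) (ha1 : a 1 = 1)
    (hsum : ∀ z ∈ unitDisk, HasSum (fun n => a n * z ^ n) (f z)) :
    ∀ z ∈ unitDisk, Dop lam al be 0 0 a z = f z := by
  intro z hz
  have hterm : ∀ n : ℕ,
      (if 2 ≤ n then ((Ups lam al be 0 n : ℝ) : ℂ) * ((Cdel 0 n : ℝ) : ℂ) * a n * z ^ n else 0)
      = (if 2 ≤ n then a n * z ^ n else 0) := by
    intro n
    by_cases hn : 2 ≤ n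
    · rw [if_pos hn, if_pos hn]
      have hU : Ups lam al be 0 n = 1 := pow_zero _
      have hC : Cdel 0 n = 1 := by
        have hpos : (0:ℝ) < (n:ℝ) := by
          have : 0 < n := lt_of_lt_of_le (by norm_num) hn
          exact_mod_cast this
        have hΓ : Real.Gamma ((n:ℝ)) ≠ 0 := (Real.Gamma_pos_of_pos hpos).ne'
        unfold Cdel
        rw [add_zero, zero_add, Real.Gamma_one, mul_one, div_self hΓ]
      rw [hU, hC]
      push_cast
      ring
    · rw [if_neg hn, if_neg hn]
  have hr : HasSum (fun n : ℕ => if 2 ≤ n then (0:ℂ) else a n * z ^ n) (z) := by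
    have hz' : (∑ n ∈ Finset.range 2, if 2 ≤ n then (0:ℂ) else a n * z ^ n) = z := by
      rw [Finset.sum_range_succ, Finset.sum_range_one]
      norm_num [ha0, ha1]
    have := hasSum_sum_of_ne_finset_zero (L := SummationFilter.unconditional ℕ) (s := Finset.range 2)
      (f := fun n : ℕ => if 2 ≤ n then (0:ℂ) else a n * z ^ n) ?_
    · rwa [hz'] at this
    · intro n hn
      rw [Finset.mem_range, not_lt] at hn
      simp only [if_pos hn]
  have hs : HasSum (fun n : ℕ => if 2 ≤ n then a n * z ^ n else 0) (f z - z) := by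
    have := (hsum z hz).sub hr
    apply this.congr_fun
    intro n
    by_cases hn : 2 ≤ n
    · simp [hn]
    · simp [hn]
  unfold Dop
  have : (∑' n : ℕ, if 2 ≤ n then ((Ups lam al be 0 n : ℝ) : ℂ) * ((Cdel 0 n : ℝ) : ℂ) * a n * z ^ n else 0)
      = f z - z := by
    rw [tsum_congr hterm]
    exact hs.tsum_eq
  rw [this]
  ring

lemma aux_baz {F f : ℂ → ℂ} (hFf : ∀ z ∈ unitDisk, F z = f z)
    (hne : ∀ z ∈ unitDisk, z ≠ 0 → F z ≠ 0)
    {z : ℂ} (hz : z ∈ unitDisk) (hz0 : z ≠ 0) :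
    bazFun 1 F z = deriv f z := by
  unfold bazFun
  rw [if_neg hz0]
  have hder : deriv F z = deriv f z := by
    have hev : F =ᶠ[nhds z] f := by
      filter_upwards [Metric.isOpen_ball.mem_nhds hz] with w hw using hFf w hw
    exact hev.deriv_eq
  have hFz : F z ≠ 0 := hne z hz hz0
  rw [Complex.ofReal_one, Complex.cpow_one, hder, hFf z hz]
  have hfz : f z ≠ 0 := by rw [← hFf z hz]; exact hFz
  field_simp

lemma aux_master {φ : ℂ → ℂ} {B : ℕ → ℝ} (lam al be : ℝ)
    (hφ : AnalyticOnNhd ℂ φ unitDisk)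
    (hφs : ∀ z ∈ unitDisk, HasSum (fun n => (B n : ℂ) * z ^ n) (φ z))
    {f : ℂ → ℂ} {a : ℕ → ℂ} (hf : IsInA f a)
    (hne : ∀ z ∈ unitDisk, z ≠ 0 → Dop lam al be 0 0 a z ≠ 0)
    (hsub : Subord (bazFun 1 (Dop lam al be 0 0 a)) φ) :
    ∃ c1 C2 : ℂ, ‖c1‖ ≤ 1 ∧ ‖C2‖ ≤ 2 * (1 - ‖c1‖ ^ 2) ∧
      2 * a 2 = (B 1 : ℂ) * c1 ∧
      6 * a 3 = 2 * (B 2 : ℂ) * c1 ^ 2 + (B 1 : ℂ) * C2 := by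
  obtain ⟨hfa, ha0, ha1, hsum⟩ := hf
  obtain ⟨u, hua, hu0, hub, heq⟩ := hsub
  have h0 : (0:ℂ) ∈ unitDisk := by simp [unitDisk]
  have humem : ∀ z ∈ unitDisk, u z ∈ unitDisk := by
    intro z hz
    simp only [unitDisk, mem_ball, dist_zero_right]
    exact hub z hz
  have hDopf := aux_Dop_eq lam al be ha0 ha1 hsum
  -- deriv f = φ ∘ u on the disk
  have hF : ∀ z ∈ unitDisk, deriv f z = φ (u z) := by
    intro z hz
    by_cases hz0 : z = 0
    · subst hz0
      have h1 : bazFun 1 (Dop lam al be 0 0 a) 0 = 1 := by unfold bazFun; simp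
      have h2 : φ (u 0) = 1 := by rw [← heq 0 h0, h1]
      rw [h2]
      rw [aux_deriv1 hsum, ha1]
    · rw [← aux_baz hDopf hne hz hz0]
      exact heq z hz
  obtain ⟨hchain1, hchain2⟩ := aux_chain hφ hua humem hu0 hF
  obtain ⟨hs1, hs2⟩ := aux_schwarz hua hu0 hub
  refine ⟨deriv u 0, deriv (deriv u) 0, hs1, hs2, ?_, ?_⟩
  · rw [← aux_deriv2 hsum, hchain1, aux_deriv1 hφs]
  · rw [← aux_deriv3 hsum]
    rw [hchain2, aux_deriv1 hφs, aux_deriv2 hφs]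

theorem cor_2_9 (α β lam : ℝ)
    (hα0 : 0 < α) (hα1 : α ≤ 1) (hβ0 : 0 < β) (hβ1 : β ≤ 1)
    (hlam : 0 ≤ lam) 
    (B : ℕ → ℝ) (φ : ℂ → ℂ)
    (hφ : AnalyticOnNhd ℂ φ unitDisk)
    (hφs : ∀ z ∈ unitDisk, HasSum (fun n => (B n : ℂ) * z ^ n) (φ z))
    (hB0 : B 0 = 1) (hB1 : 0 < B 1)
    (f g : ℂ → ℂ) (a b : ℕ → ℂ)
    (hmem : MemB lam α β 0 0 1 φ f g a b)
    (hden : 3 * B 1 ^ 2 - 4 * (B 2 - B 1) ≠ 0) :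
    ‖a 2‖ ≤ B 1 * Real.sqrt (B 1) / Real.sqrt |3 * B 1 ^ 2 - 4 * (B 2 - B 1)| ∧
    ‖a 3‖ ≤ B 1 / 3 + (B 1 / 2) ^ 2 := by
  obtain ⟨hfa, hinjf, hgb, hinjg, hinv, hb2, hb3, hneA, hneB, hsubA, hsubB⟩ := hmem
  obtain ⟨c1, C2, hx1, hyC, e1, e2⟩ := aux_master lam α β hφ hφs hfa hneA hsubA
  obtain ⟨d1, D2, hx2, hyD, e3, e4⟩ := aux_master lam α β hφ hφs hgb hneB hsubB
  rw [hb2] at e3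
  rw [hb3] at e4
  have hB1C : ((B 1 : ℝ) : ℂ) ≠ 0 := by
    simp only [ne_eq, Complex.ofReal_eq_zero]
    exact hB1.ne'
  -- d1 = -c1
  have hd1 : d1 = -c1 := by
    have h : ((B 1 : ℝ) : ℂ) * (d1 + c1) = 0 := by linear_combination -e1 - e3
    rcases mul_eq_zero.mp h with h' | h'
    · exact absurd h' hB1C
    · linear_combination h'
  rw [hd1] at e3 e4
  -- complex identities
  have G1 : a 2 ^ 2 * (12 * ((B 1 : ℝ) : ℂ) ^ 2 - 16 * ((B 2 : ℝ) : ℂ))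
      = ((B 1 : ℝ) : ℂ) ^ 3 * (C2 + D2) := by
    linear_combination ((B 1 : ℝ) : ℂ)^2 * e2 + ((B 1 : ℝ) : ℂ)^2 * e4
      + (-2*((B 2 : ℝ):ℂ)*(((B 1 : ℝ):ℂ)*c1+2*a 2)) * e1
      + (2*((B 2 : ℝ):ℂ)*(((B 1 : ℝ):ℂ)*c1+2*a 2)) * e3
  have G2 : 12 * a 3 = 12 * a 2 ^ 2 + ((B 1 : ℝ) : ℂ) * (C2 - D2) := by
    linear_combination e2 - e4
  -- pass to absolute values
  set A2 := ‖a 2‖ with hA2def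
  set A3 := ‖a 3‖ with hA3def
  set x := ‖c1‖ with hxdef
  set yC := ‖C2‖ with hyCdef
  set yD := ‖D2‖ with hyDdef
  have hA2nn : 0 ≤ A2 := norm_nonneg _
  have hxnn : 0 ≤ x := norm_nonneg _
  have habsB1 : ‖((B 1 : ℝ) : ℂ)‖ = B 1 := by
    rw [Complex.norm_real, Real.norm_eq_abs, abs_of_pos hB1]
  have he1abs : 2 * A2 = B 1 * x := by
    have := congrArg (‖·‖) e1
    rwa [norm_mul, norm_mul, habsB1,
      show ‖(2:ℂ)‖ = 2 by rw [show (2:ℂ) = ((2:ℝ):ℂ) by norm_num, Complex.norm_real, Real.norm_eq_abs]; norm_num]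
      at this
  have hK : (12 * ((B 1 : ℝ) : ℂ) ^ 2 - 16 * ((B 2 : ℝ) : ℂ))
      = (((12 * B 1 ^ 2 - 16 * B 2 : ℝ)) : ℂ) := by push_cast; ring
  have hG1abs : A2 ^ 2 * |12 * B 1 ^ 2 - 16 * B 2| = B 1 ^ 3 * ‖C2 + D2‖ := by
    have := congrArg (‖·‖) G1
    rwa [norm_mul, norm_mul, norm_pow, norm_pow, hK, Complex.norm_real, Real.norm_eq_abs, habsB1] at this
  have hsum_le : ‖C2 + D2‖ ≤ yC + yD := norm_add_le _ _
  have hdiff_le : ‖C2 - D2‖ ≤ yC + yD := by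
    rw [sub_eq_add_neg]
    calc ‖C2 + -D2‖ ≤ yC + ‖-D2‖ := norm_add_le _ _
    _ = yC + yD := by rw [norm_neg]
  have hxd : ‖d1‖ = x := by rw [hd1, norm_neg]
  rw [hxd] at hyD
  -- bound for |a 2|
  set T := |3 * B 1 ^ 2 - 4 * (B 2 - B 1)| with hTdef
  have hTpos : 0 < T := abs_pos.mpr hden
  have hT4 : 4 * T ≤ |12 * B 1 ^ 2 - 16 * B 2| + 16 * B 1 := by
    have h1 : |12 * B 1 ^ 2 - 16 * B 2 + 16 * B 1| ≤ |12 * B 1 ^ 2 - 16 * B 2| + |16 * B 1| :=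
      abs_add_le _ _
    have h2 : |16 * B 1| = 16 * B 1 := abs_of_pos (by linarith)
    have h3 : |12 * B 1 ^ 2 - 16 * B 2 + 16 * B 1| = 4 * T := by
      rw [hTdef, show 12 * B 1 ^ 2 - 16 * B 2 + 16 * B 1 = 4 * (3 * B 1 ^ 2 - 4 * (B 2 - B 1)) by ring,
        abs_mul, abs_of_pos (by norm_num : (0:ℝ) < 4)]
    linarith
  have key : A2 ^ 2 * T ≤ B 1 ^ 3 := by
    have hCD : ‖C2 + D2‖ ≤ 4 - 4 * x ^ 2 := by linarith
    have hstep : A2 ^ 2 * (4 * T) ≤ A2 ^ 2 * (|12 * B 1 ^ 2 - 16 * B 2| + 16 * B 1) :=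
      mul_le_mul_of_nonneg_left hT4 (by positivity)
    have hB13 : (0:ℝ) < B 1 ^ 3 := by positivity
    have he2' : 4 * A2 ^ 2 = B 1 ^ 2 * x ^ 2 := by
      have he2 : (2 * A2) ^ 2 = (B 1 * x) ^ 2 := by rw [he1abs]
      linear_combination he2
    have he3 : 16 * B 1 * A2 ^ 2 = 4 * B 1 ^ 3 * x ^ 2 := by linear_combination 4 * B 1 * he2'
    have hmul := mul_le_mul_of_nonneg_left hCD hB13.le
    nlinarith [hstep, hG1abs, hmul, he3]
  constructor
  · have hA2sq : A2 ^ 2 ≤ B 1 ^ 3 / T := (le_div_iff₀ hTpos).mpr key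
    calc A2 = Real.sqrt (A2 ^ 2) := by rw [Real.sqrt_sq hA2nn]
    _ ≤ Real.sqrt (B 1 ^ 3 / T) := Real.sqrt_le_sqrt hA2sq
    _ = Real.sqrt (B 1 ^ 3) / Real.sqrt T := Real.sqrt_div (by positivity) _
    _ = B 1 * Real.sqrt (B 1) / Real.sqrt T := by
        rw [show B 1 ^ 3 = B 1 ^ 2 * B 1 by ring, Real.sqrt_mul (by positivity),
          Real.sqrt_sq hB1.le]
  · -- bound for |a 3|
    have hG2abs : 12 * A3 ≤ 12 * A2 ^ 2 + B 1 * (yC + yD) := by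
      have h1 : ‖12 * a 3‖ = 12 * A3 := by
        rw [norm_mul, show ‖(12:ℂ)‖ = 12 by
          rw [show (12:ℂ) = ((12:ℝ):ℂ) by norm_num, Complex.norm_real, Real.norm_eq_abs]; norm_num]
      have h2 : ‖12 * a 2 ^ 2 + ((B 1 : ℝ) : ℂ) * (C2 - D2)‖
          ≤ 12 * A2 ^ 2 + B 1 * (yC + yD) := by
        calc ‖12 * a 2 ^ 2 + ((B 1 : ℝ) : ℂ) * (C2 - D2)‖
            ≤ ‖12 * a 2 ^ 2‖ + ‖((B 1 : ℝ) : ℂ) * (C2 - D2)‖ :=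
              norm_add_le _ _
        _ ≤ 12 * A2 ^ 2 + B 1 * (yC + yD) := by
            rw [norm_mul, norm_mul, norm_pow, show ‖(12:ℂ)‖ = 12 by
              rw [show (12:ℂ) = ((12:ℝ):ℂ) by norm_num, Complex.norm_real, Real.norm_eq_abs]; norm_num, habsB1]
            have := mul_le_mul_of_nonneg_left hdiff_le hB1.le
            linarith
      rw [← h1, G2]
      exact h2
    have he2' : 4 * A2 ^ 2 = B 1 ^ 2 * x ^ 2 := by
      have he2 : (2 * A2) ^ 2 = (B 1 * x) ^ 2 := by rw [he1abs]
      linear_combination he2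
    have hx2le : (0:ℝ) ≤ 1 - x ^ 2 := by nlinarith [hx1, hxnn]
    have hm1 : B 1 * (yC + yD) ≤ B 1 * (4 - 4 * x ^ 2) :=
      mul_le_mul_of_nonneg_left (by linarith) hB1.le
    have hm2 : (0:ℝ) ≤ B 1 ^ 2 * (1 - x ^ 2) := mul_nonneg (sq_nonneg _) hx2le
    have hm3 : (0:ℝ) ≤ B 1 * x ^ 2 := mul_nonneg hB1.le (sq_nonneg _)
    linarith [hG2abs, hm1, hm2, hm3, he2']
end
end
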